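/- arXiv:1108.0065 — 8 statements merged into one kernel-verified Lean document; each statement's English description precedes it below -/
import Mathlib

section
/- Let p be an n×n real matrix with nonnegative entries. Suppose β lies in the interior of the β-polytope 𝓑_p of p and solves the BP equations for p. Then perm(p) = Z_BP(β|p) · perm(M) / ∏_{(i,j): p_ij>0} (1−β_ij), where M is the n×n matrix with entries M_ij = β_ij·(1−β_ij). -/
open scoped BigOperators

/-- The permanent of an `n × n` real matrix. -/
noncomputable def permanent {n : ℕ} (p : Matrix (Fin n) (Fin n) ℝ) : ℝ :=
  ∑ σ : Equiv.Perm (Fin n), ∏ i, p i (σ i)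

/-- A matrix is doubly stochastic: nonnegative entries, all row and column sums equal 1. -/
def DoublyStochastic {n : ℕ} (β : Matrix (Fin n) (Fin n) ℝ) : Prop :=
  (∀ i j, 0 ≤ β i j) ∧ (∀ i, ∑ j, β i j = 1) ∧ (∀ j, ∑ i, β i j = 1)

/-- Membership in the β-polytope `𝓑_p` of `p`. -/
def InPolytope {n : ℕ} (p β : Matrix (Fin n) (Fin n) ℝ) : Prop :=
  DoublyStochastic β ∧ ∀ i j, p i j = 0 → β i j = 0

/-- Membership in the interior of the β-polytope of `p`. -/
def InInterior {n : ℕ} (p β : Matrix (Fin n) (Fin n) ℝ) : Prop :=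
  InPolytope p β ∧ ∀ i j, 0 < p i j → 0 < β i j ∧ β i j < 1

/-- Bethe free energy `F_BP(β|p)` (sum over entries with `p i j > 0`;
the convention `0 * log 0 = 0` holds since `Real.log 0 = 0`). -/
noncomputable def FBP {n : ℕ} (p β : Matrix (Fin n) (Fin n) ℝ) : ℝ :=
  ∑ i, ∑ j, if 0 < p i j then
    β i j * Real.log (β i j / p i j) - (1 - β i j) * Real.log (1 - β i j)
  else 0

/-- Mean-field free energy `F_MF(β|p)`. -/
noncomputable def FMF {n : ℕ} (p β : Matrix (Fin n) (Fin n) ℝ) : ℝ :=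
  ∑ i, ∑ j, if 0 < p i j then
    β i j * Real.log (β i j / p i j) + (1 - β i j) * Real.log (1 - β i j)
  else 0

/-- Fractional free energy `F_f^γ(β|p)`. -/
noncomputable def Ff {n : ℕ} (γ : ℝ) (p β : Matrix (Fin n) (Fin n) ℝ) : ℝ :=
  ∑ i, ∑ j, if 0 < p i j then
    β i j * Real.log (β i j / p i j) + γ * ((1 - β i j) * Real.log (1 - β i j))
  else 0

/-- Optimal fractional partition function `Z_of^γ(p) = exp(-min_{β ∈ 𝓑_p} F_f^γ(β|p))`
(the minimum is expressed as an infimum; it is attained since `𝓑_p` is nonempty and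
compact when `permanent p > 0` and `F_f^γ(·|p)` is continuous on it). -/
noncomputable def Zof {n : ℕ} (γ : ℝ) (p : Matrix (Fin n) (Fin n) ℝ) : ℝ :=
  Real.exp (-(sInf ((fun β => Ff γ p β) '' {β | InPolytope p β})))

theorem permanent_BP_exact {n : ℕ} (p β : Matrix (Fin n) (Fin n) ℝ)
    (hp : ∀ i j, 0 ≤ p i j) (hβ : InInterior p β)
    (hBP : ∃ u v : Fin n → ℝ, (∀ i, 0 < u i) ∧ (∀ j, 0 < v j) ∧
      ∀ i j, β i j * (1 - β i j) = p i j / (u i * v j)) :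
    permanent p = Real.exp (-(FBP p β)) *
      permanent (fun i j => β i j * (1 - β i j)) /
      ∏ i, ∏ j, (if 0 < p i j then 1 - β i j else 1) := by
  obtain ⟨u, v, hu, hv, hbp⟩ := hBP
  obtain ⟨⟨⟨hβnn, hrow, hcol⟩, hβ0⟩, hβint⟩ := hβ
  have hpm : ∀ i j, p i j = u i * v j * (β i j * (1 - β i j)) := by
    intro i j
    have huv : u i * v j ≠ 0 := mul_ne_zero (ne_of_gt (hu i)) (ne_of_gt (hv j))
    have h := (eq_div_iff huv).mp (hbp i j)
    linear_combination -h
  have hB : permanent p = (∏ i, u i) * (∏ j, v j) *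
      permanent (fun i j => β i j * (1 - β i j)) := by
    unfold permanent
    rw [Finset.mul_sum]
    refine Finset.sum_congr rfl fun σ _ => ?_
    calc ∏ i, p i (σ i)
        = ∏ i, (u i * v (σ i) * (β i (σ i) * (1 - β i (σ i)))) :=
          Finset.prod_congr rfl fun i _ => hpm i (σ i)
      _ = ((∏ i, u i) * ∏ i, v (σ i)) * ∏ i, (β i (σ i) * (1 - β i (σ i))) := by
          rw [Finset.prod_mul_distrib, Finset.prod_mul_distrib]
      _ = (∏ i, u i) * (∏ j, v j) * ∏ i, (β i (σ i) * (1 - β i (σ i))) := by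
          rw [Equiv.prod_comp σ v]
  have h1 : FBP p β = ∑ i, ∑ j, -(β i j * Real.log (u i) + β i j * Real.log (v j)
      + (if 0 < p i j then Real.log (1 - β i j) else 0)) := by
    unfold FBP
    refine Finset.sum_congr rfl fun i _ => Finset.sum_congr rfl fun j _ => ?_
    by_cases h : 0 < p i j
    · have hb := hβint i j h
      have h1' : (0:ℝ) < 1 - β i j := by linarith [hb.2]
      rw [if_pos h, if_pos h]
      have hlog : Real.log (β i j / p i j)
          = -(Real.log (u i) + Real.log (v j) + Real.log (1 - β i j)) := by
        rw [hpm i j, Real.log_div (ne_of_gt hb.1)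
            (mul_ne_zero (mul_ne_zero (ne_of_gt (hu i)) (ne_of_gt (hv j)))
              (mul_ne_zero (ne_of_gt hb.1) (ne_of_gt h1'))),
          Real.log_mul (mul_ne_zero (ne_of_gt (hu i)) (ne_of_gt (hv j)))
            (mul_ne_zero (ne_of_gt hb.1) (ne_of_gt h1')),
          Real.log_mul (ne_of_gt (hu i)) (ne_of_gt (hv j)),
          Real.log_mul (ne_of_gt hb.1) (ne_of_gt h1')]
        ring
      rw [hlog]; ring
    · have hp0 : p i j = 0 := le_antisymm (not_lt.mp h) (hp i j)
      simp [h, hβ0 i j hp0]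
  have s1' : ∑ i, ∑ j, β i j * Real.log (u i) = ∑ i, Real.log (u i) :=
    Finset.sum_congr rfl fun i _ => by rw [← Finset.sum_mul, hrow i, one_mul]
  have s2 : ∑ i, ∑ j, β i j * Real.log (v j) = ∑ j, Real.log (v j) := by
    rw [Finset.sum_comm]
    exact Finset.sum_congr rfl fun j _ => by rw [← Finset.sum_mul, hcol j, one_mul]
  have key : FBP p β = -((∑ i, Real.log (u i)) + (∑ j, Real.log (v j))
      + ∑ i, ∑ j, (if 0 < p i j then Real.log (1 - β i j) else 0)) := by
    rw [h1]
    simp_rw [Finset.sum_neg_distrib, Finset.sum_add_distrib]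
    rw [s1', s2]
  have hA : Real.exp (-(FBP p β)) = ((∏ i, u i) * (∏ j, v j)) *
      ∏ i, ∏ j, (if 0 < p i j then 1 - β i j else 1) := by
    rw [key, neg_neg, Real.exp_add, Real.exp_add]
    congr 1
    · congr 1
      · rw [Real.exp_sum]; exact Finset.prod_congr rfl fun i _ => Real.exp_log (hu i)
      · rw [Real.exp_sum]; exact Finset.prod_congr rfl fun j _ => Real.exp_log (hv j)
    · rw [Real.exp_sum]
      refine Finset.prod_congr rfl fun i _ => ?_
      rw [Real.exp_sum]
      refine Finset.prod_congr rfl fun j _ => ?_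
      by_cases h : 0 < p i j
      · rw [if_pos h, if_pos h, Real.exp_log (by linarith [(hβint i j h).2])]
      · simp [h]
  have hDpos : (0:ℝ) < ∏ i, ∏ j, (if 0 < p i j then 1 - β i j else 1) :=
    Finset.prod_pos fun i _ => Finset.prod_pos fun j _ => by
      by_cases h : 0 < p i j
      · rw [if_pos h]; linarith [(hβint i j h).2]
      · rw [if_neg h]; norm_num
  rw [hB, hA, eq_div_iff (ne_of_gt hDpos)]
  ring
end

section
/- Let p be an n×n real matrix with nonnegative entries. The Bethe free energy F_BP(·|p) is convex on the β-polytope 𝓑_p of p: for all β₁, β₂ ∈ 𝓑_p and all t ∈ [0,1], the matrix t·β₁ + (1−t)·β₂ lies in 𝓑_p and F_BP(t·β₁ + (1−t)·β₂ | p) ≤ t·F_BP(β₁|p) + (1−t)·F_BP(β₂|p). -/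
open scoped BigOperators

section FBPConvexAux
open Finset in

/-- Key inequality: for a probability vector `x` and `u` summing to `0`,
`∑ u²/(1-x) ≤ ∑ u²/x` (with junk-value conventions when `u j = 0`). -/
lemma simplex_quad {n : ℕ} (x u : Fin n → ℝ) (hx0 : ∀ j, 0 ≤ x j)
    (hxs : ∑ j, x j = 1) (hus : ∑ j, u j = 0)
    (h : ∀ j, u j ≠ 0 → 0 < x j ∧ x j < 1) :
    ∑ j, (u j) ^ 2 * (1 / (1 - x j)) ≤ ∑ j, (u j) ^ 2 * (1 / (x j)) := by
  by_cases hm : ∀ j, x j ≤ 1 / 2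
  · apply Finset.sum_le_sum
    intro j _
    by_cases hj : u j = 0
    · simp [hj]
    · obtain ⟨h0, _⟩ := h j hj
      have h2 : 1 / (1 - x j) ≤ 1 / (x j) :=
        one_div_le_one_div_of_le h0 (by linarith [hm j])
      exact mul_le_mul_of_nonneg_left h2 (sq_nonneg _)
  · push_neg at hm
    obtain ⟨m, hm⟩ := hm
    set s : Finset (Fin n) := Finset.univ.erase m with hs
    have hmem : m ∈ (Finset.univ : Finset (Fin n)) := Finset.mem_univ m
    have hsum_s : ∑ j ∈ s, x j = 1 - x m := by
      have := Finset.add_sum_erase Finset.univ x hmem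
      rw [hxs] at this; linarith
    have husum : ∑ j ∈ s, u j = -(u m) := by
      have := Finset.add_sum_erase Finset.univ u hmem
      rw [hus] at this; linarith
    have hj_le : ∀ j ∈ s, x j ≤ 1 - x m := by
      intro j hj
      have h1 : x j ≤ ∑ k ∈ s, x k :=
        Finset.single_le_sum (fun k _ => hx0 k) hj
      linarith [hsum_s]
    set A := ∑ j ∈ s, (u j) ^ 2 * (1 / (x j)) with hA
    set B := ∑ j ∈ s, (u j) ^ 2 * (1 / (1 - x j)) with hB
    have hA0 : 0 ≤ A := by
      apply Finset.sum_nonneg; intro j _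
      by_cases hj : u j = 0
      · simp [hj]
      · have := (h j hj).1; positivity
    have hCS : (u m) ^ 2 ≤ (1 - x m) * A := by
      have h1 := Finset.sum_mul_sq_le_sq_mul_sq s (fun j => Real.sqrt (x j))
        (fun j => u j / Real.sqrt (x j))
      have e1 : ∑ j ∈ s, Real.sqrt (x j) * (u j / Real.sqrt (x j)) = ∑ j ∈ s, u j := by
        apply Finset.sum_congr rfl; intro j _
        by_cases hj : u j = 0
        · simp [hj]
        · have h0 := (h j hj).1
          have : Real.sqrt (x j) ≠ 0 := by positivity
          field_simp
      have e2 : ∑ j ∈ s, (Real.sqrt (x j)) ^ 2 = 1 - x m := by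
        rw [← hsum_s]; apply Finset.sum_congr rfl; intro j _
        exact Real.sq_sqrt (hx0 j)
      have e3 : ∑ j ∈ s, (u j / Real.sqrt (x j)) ^ 2 = A := by
        rw [hA]; apply Finset.sum_congr rfl; intro j _
        by_cases hj : u j = 0
        · simp [hj]
        · have h0 := (h j hj).1
          rw [div_pow, Real.sq_sqrt (hx0 j), div_eq_mul_one_div]
      rw [e1, e2, e3, husum] at h1
      calc (u m) ^ 2 = (-(u m)) ^ 2 := by ring
        _ ≤ (1 - x m) * A := h1
    have hBA : B * (x m) ≤ (1 - x m) * A := by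
      have hterm : ∀ j ∈ s, (u j) ^ 2 * (1 / (1 - x j)) * (x m)
          ≤ (1 - x m) * ((u j) ^ 2 * (1 / (x j))) := by
        intro j hj
        by_cases hju : u j = 0
        · simp [hju]
        · obtain ⟨h0, h1⟩ := h j hju
          have hxj : x j ≤ 1 - x m := hj_le j hj
          have hxm : x m ≤ 1 - x j := by linarith
          have h1xj : 0 < 1 - x j := by linarith [hm]
          have h5 : x m / (1 - x j) ≤ (1 - x m) / (x j) := by
            rw [div_le_div_iff₀ h1xj h0]
            nlinarith
          calc (u j) ^ 2 * (1 / (1 - x j)) * (x m) = (u j) ^ 2 * (x m / (1 - x j)) := by ring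
            _ ≤ (u j) ^ 2 * ((1 - x m) / (x j)) := mul_le_mul_of_nonneg_left h5 (sq_nonneg _)
            _ = (1 - x m) * ((u j) ^ 2 * (1 / (x j))) := by ring
      calc B * (x m) = ∑ j ∈ s, (u j) ^ 2 * (1 / (1 - x j)) * (x m) := by
            rw [hB, Finset.sum_mul]
        _ ≤ ∑ j ∈ s, (1 - x m) * ((u j) ^ 2 * (1 / (x j))) := Finset.sum_le_sum hterm
        _ = (1 - x m) * A := by rw [hA, Finset.mul_sum]
    have hsplitL : ∑ j, (u j) ^ 2 * (1 / (1 - x j))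
        = (u m) ^ 2 * (1 / (1 - x m)) + B := by
      rw [hB]; exact (Finset.add_sum_erase Finset.univ _ hmem).symm
    have hsplitR : ∑ j, (u j) ^ 2 * (1 / (x j))
        = (u m) ^ 2 * (1 / (x m)) + A := by
      rw [hA]; exact (Finset.add_sum_erase Finset.univ _ hmem).symm
    rw [hsplitL, hsplitR]
    by_cases hum : u m = 0
    · simp only [hum]
      have hxm0 : (0:ℝ) < x m := by linarith
      nlinarith [hBA, hA0]
    · obtain ⟨hm0, hm1⟩ := h m hum
      have hd : (0:ℝ) < x m * (1 - x m) := by nlinarith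
      rw [← sub_nonneg]
      have heq : (u m) ^ 2 * (1 / (x m)) + A - ((u m) ^ 2 * (1 / (1 - x m)) + B)
          = ((u m) ^ 2 * (1 - x m) + A * (x m * (1 - x m))
            - ((u m) ^ 2 * (x m) + B * (x m * (1 - x m)))) / (x m * (1 - x m)) := by
        have hne1 : x m ≠ 0 := ne_of_gt hm0
        have hne2 : (1:ℝ) - x m ≠ 0 := by linarith
        field_simp
      rw [heq]
      apply div_nonneg _ hd.le
      have h1 := mul_le_mul_of_nonneg_right hCS (by linarith : (0:ℝ) ≤ 2 * x m - 1)
      have h2 := mul_le_mul_of_nonneg_right hBA (by linarith : (0:ℝ) ≤ 1 - x m)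
      nlinarith [h1, h2]


lemma entry_cont (a u q : ℝ) (hq : 0 < q) :
    Continuous (fun s : ℝ => (a + s * u) * Real.log ((a + s * u) / q)
      - (1 - (a + s * u)) * Real.log (1 - (a + s * u))) := by
  have hx : Continuous fun s : ℝ => a + s * u := by continuity
  have h2 : Continuous fun s : ℝ => (1 - (a + s * u)) * Real.log (1 - (a + s * u)) :=
    Real.continuous_mul_log.comp (by continuity)
  apply Continuous.sub _ h2
  have h1 : (fun s : ℝ => (a + s * u) * Real.log ((a + s * u) / q))
      = fun s : ℝ => q * (((a + s * u) / q) * Real.log ((a + s * u) / q)) := by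
    funext s
    field_simp
  rw [h1]
  exact continuous_const.mul (Real.continuous_mul_log.comp (hx.div_const q))

lemma entry_d1 (a u q : ℝ) (hq : 0 < q) (s : ℝ)
    (hx : u ≠ 0 → 0 < a + s * u ∧ a + s * u < 1) :
    HasDerivAt (fun s : ℝ => (a + s * u) * Real.log ((a + s * u) / q)
      - (1 - (a + s * u)) * Real.log (1 - (a + s * u)))
      (u * (Real.log ((a + s * u) / q) + Real.log (1 - (a + s * u)) + 2)) s := by
  by_cases hu : u = 0
  · subst hu
    simp only [mul_zero, add_zero, zero_mul]
    exact hasDerivAt_const s _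
  · obtain ⟨h0, h1⟩ := hx hu
    have hx' : HasDerivAt (fun s : ℝ => a + s * u) u s := by
      simpa using ((hasDerivAt_id s).mul_const u).const_add a
    have hdiv : HasDerivAt (fun s : ℝ => (a + s * u) / q) (u / q) s := hx'.div_const q
    have hlog1 : HasDerivAt (fun s : ℝ => Real.log ((a + s * u) / q))
        ((u / q) / ((a + s * u) / q)) s :=
      hdiv.log (div_ne_zero (ne_of_gt h0) (ne_of_gt hq))
    have h1x : HasDerivAt (fun s : ℝ => 1 - (a + s * u)) (-u) s := hx'.const_sub 1
    have hlog2 : HasDerivAt (fun s : ℝ => Real.log (1 - (a + s * u)))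
        ((-u) / (1 - (a + s * u))) s := h1x.log (by linarith)
    have hA := hx'.mul hlog1
    have hB := h1x.mul hlog2
    have := hA.sub hB
    refine this.congr_deriv ?_
    have hne0 : a + s * u ≠ 0 := ne_of_gt h0
    have hne1 : (1:ℝ) - (a + s * u) ≠ 0 := by linarith
    rw [div_div_div_cancel_right₀ (ne_of_gt hq), mul_div_cancel₀ _ hne0, mul_div_cancel₀ _ hne1]
    ring

lemma entry_d2 (a u q : ℝ) (hq : 0 < q) (s : ℝ)
    (hx : u ≠ 0 → 0 < a + s * u ∧ a + s * u < 1) :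
    HasDerivAt (fun s : ℝ => u * (Real.log ((a + s * u) / q)
        + Real.log (1 - (a + s * u)) + 2))
      (u ^ 2 * (1 / (a + s * u) - 1 / (1 - (a + s * u)))) s := by
  by_cases hu : u = 0
  · subst hu
    simp only [zero_mul, mul_zero, add_zero]
    norm_num
    exact hasDerivAt_const s _
  · obtain ⟨h0, h1⟩ := hx hu
    have hx' : HasDerivAt (fun s : ℝ => a + s * u) u s := by
      simpa using ((hasDerivAt_id s).mul_const u).const_add a
    have hlog1 : HasDerivAt (fun s : ℝ => Real.log ((a + s * u) / q))
        ((u / q) / ((a + s * u) / q)) s :=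
      (hx'.div_const q).log (div_ne_zero (ne_of_gt h0) (ne_of_gt hq))
    have hlog2 : HasDerivAt (fun s : ℝ => Real.log (1 - (a + s * u)))
        ((-u) / (1 - (a + s * u))) s := (hx'.const_sub 1).log (by linarith)
    have := (((hlog1.add hlog2).add_const 2).const_mul u)
    refine this.congr_deriv ?_
    have hne0 : a + s * u ≠ 0 := ne_of_gt h0
    have hne1 : (1:ℝ) - (a + s * u) ≠ 0 := by linarith
    field_simp
    ring

lemma combo_mem (b₁ b₂ s : ℝ) (h10 : 0 ≤ b₁) (h11 : b₁ ≤ 1) (h20 : 0 ≤ b₂) (h21 : b₂ ≤ 1)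
    (hne : b₁ - b₂ ≠ 0) (hs0 : 0 < s) (hs1 : s < 1) :
    0 < b₂ + s * (b₁ - b₂) ∧ b₂ + s * (b₁ - b₂) < 1 := by
  have hne' : b₁ ≠ b₂ := fun e => hne (by rw [e]; ring)
  constructor
  · rcases eq_or_lt_of_le h20 with h | h
    · have hb1 : 0 < b₁ := h10.lt_of_ne (fun e => hne' (by rw [← e, ← h]))
      nlinarith
    · nlinarith [mul_nonneg hs0.le h10]
  · rcases eq_or_lt_of_le h21 with h | h
    · have hb1 : b₁ < 1 := lt_of_le_of_ne h11 (fun e => hne' (by rw [e, h]))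
      nlinarith
    · nlinarith [mul_nonneg hs0.le (by linarith : (0:ℝ) ≤ 1 - b₁)]

end FBPConvexAux

theorem FBP_convexOn {n : ℕ} (p : Matrix (Fin n) (Fin n) ℝ)
    (hp : ∀ i j, 0 ≤ p i j) :
    ∀ β₁ β₂ : Matrix (Fin n) (Fin n) ℝ, InPolytope p β₁ → InPolytope p β₂ →
      ∀ t : ℝ, 0 ≤ t → t ≤ 1 →
        InPolytope p (t • β₁ + (1 - t) • β₂) ∧
        FBP p (t • β₁ + (1 - t) • β₂) ≤ t * FBP p β₁ + (1 - t) * FBP p β₂ := by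
  intro β₁ β₂ h₁ h₂ t ht0 ht1
  obtain ⟨⟨h₁n, h₁r, h₁c⟩, h₁z⟩ := h₁
  obtain ⟨⟨h₂n, h₂r, h₂c⟩, h₂z⟩ := h₂
  have hb₁le : ∀ i j, β₁ i j ≤ 1 := by
    intro i j
    have h := Finset.single_le_sum (f := fun k => β₁ i k) (fun k _ => h₁n i k)
      (Finset.mem_univ j)
    exact le_of_le_of_eq h (h₁r i)
  have hb₂le : ∀ i j, β₂ i j ≤ 1 := by
    intro i j
    have h := Finset.single_le_sum (f := fun k => β₂ i k) (fun k _ => h₂n i k)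
      (Finset.mem_univ j)
    exact le_of_le_of_eq h (h₂r i)
  have hentry : ∀ i j, (t • β₁ + (1 - t) • β₂) i j = t * β₁ i j + (1 - t) * β₂ i j := by
    intro i j
    simp [Matrix.add_apply, Matrix.smul_apply, smul_eq_mul]
  refine ⟨⟨⟨?_, ?_, ?_⟩, ?_⟩, ?_⟩
  · intro i j
    rw [hentry]
    have := mul_nonneg ht0 (h₁n i j)
    have := mul_nonneg (by linarith : (0:ℝ) ≤ 1 - t) (h₂n i j)
    linarith
  · intro i
    calc ∑ j, (t • β₁ + (1 - t) • β₂) i j = ∑ j, (t * β₁ i j + (1 - t) * β₂ i j) :=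
          Finset.sum_congr rfl fun j _ => hentry i j
      _ = t * (∑ j, β₁ i j) + (1 - t) * (∑ j, β₂ i j) := by
          rw [Finset.sum_add_distrib, Finset.mul_sum, Finset.mul_sum]
      _ = 1 := by rw [h₁r i, h₂r i]; ring
  · intro j
    calc ∑ i, (t • β₁ + (1 - t) • β₂) i j = ∑ i, (t * β₁ i j + (1 - t) * β₂ i j) :=
          Finset.sum_congr rfl fun i _ => hentry i j
      _ = t * (∑ i, β₁ i j) + (1 - t) * (∑ i, β₂ i j) := by
          rw [Finset.sum_add_distrib, Finset.mul_sum, Finset.mul_sum]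
      _ = 1 := by rw [h₁c j, h₂c j]; ring
  · intro i j hp0
    rw [hentry, h₁z i j hp0, h₂z i j hp0]
    ring
  -- the convexity inequality
  set φ : ℝ → ℝ := fun s => ∑ i, ∑ j, if 0 < p i j then
      (β₂ i j + s * (β₁ i j - β₂ i j))
        * Real.log ((β₂ i j + s * (β₁ i j - β₂ i j)) / p i j)
      - (1 - (β₂ i j + s * (β₁ i j - β₂ i j)))
        * Real.log (1 - (β₂ i j + s * (β₁ i j - β₂ i j))) else 0 with hφdef
  have hφ : ∀ s : ℝ, FBP p (s • β₁ + (1 - s) • β₂) = φ s := by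
    intro s
    rw [hφdef]
    unfold FBP
    refine Finset.sum_congr rfl fun i _ => Finset.sum_congr rfl fun j _ => ?_
    have he : (s • β₁ + (1 - s) • β₂) i j = β₂ i j + s * (β₁ i j - β₂ i j) := by
      simp [Matrix.add_apply, Matrix.smul_apply, smul_eq_mul]
      ring
    rw [he]
  set φ' : ℝ → ℝ := fun s => ∑ i, ∑ j, if 0 < p i j then
      (β₁ i j - β₂ i j) * (Real.log ((β₂ i j + s * (β₁ i j - β₂ i j)) / p i j)
        + Real.log (1 - (β₂ i j + s * (β₁ i j - β₂ i j))) + 2) else 0 with hφ'def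
  set φ'' : ℝ → ℝ := fun s => ∑ i, ∑ j, if 0 < p i j then
      (β₁ i j - β₂ i j) ^ 2 * (1 / (β₂ i j + s * (β₁ i j - β₂ i j))
        - 1 / (1 - (β₂ i j + s * (β₁ i j - β₂ i j)))) else 0 with hφ''def
  have hbounds : ∀ i j (s : ℝ), s ∈ Set.Ioo (0:ℝ) 1 → β₁ i j - β₂ i j ≠ 0 →
      0 < β₂ i j + s * (β₁ i j - β₂ i j) ∧ β₂ i j + s * (β₁ i j - β₂ i j) < 1 := by
    intro i j s hs hne
    exact combo_mem (β₁ i j) (β₂ i j) s (h₁n i j) (hb₁le i j) (h₂n i j) (hb₂le i j)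
      hne hs.1 hs.2
  have hcont : Continuous φ := by
    rw [hφdef]
    apply continuous_finset_sum
    intro i _
    apply continuous_finset_sum
    intro j _
    by_cases hp' : 0 < p i j
    · simp only [if_pos hp']
      exact entry_cont _ _ _ hp'
    · simp only [if_neg hp']
      exact continuous_const
  have hd1 : ∀ s ∈ Set.Ioo (0:ℝ) 1, HasDerivAt φ (φ' s) s := by
    intro s hs
    rw [hφdef, hφ'def]
    apply HasDerivAt.fun_sum
    intro i _
    apply HasDerivAt.fun_sum
    intro j _
    by_cases hp' : 0 < p i j
    · simp only [if_pos hp']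
      exact entry_d1 _ _ _ hp' s (hbounds i j s hs)
    · simp only [if_neg hp']
      exact hasDerivAt_const s 0
  have hd2 : ∀ s ∈ Set.Ioo (0:ℝ) 1, HasDerivAt φ' (φ'' s) s := by
    intro s hs
    rw [hφ'def, hφ''def]
    apply HasDerivAt.fun_sum
    intro i _
    apply HasDerivAt.fun_sum
    intro j _
    by_cases hp' : 0 < p i j
    · simp only [if_pos hp']
      exact entry_d2 _ _ _ hp' s (hbounds i j s hs)
    · simp only [if_neg hp']
      exact hasDerivAt_const s 0
  have h2nn : ∀ s ∈ Set.Ioo (0:ℝ) 1, 0 ≤ φ'' s := by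
    intro s hs
    rw [hφ''def]
    apply Finset.sum_nonneg
    intro i _
    have hx0 : ∀ j, 0 ≤ β₂ i j + s * (β₁ i j - β₂ i j) := by
      intro j
      nlinarith [mul_nonneg hs.1.le (h₁n i j),
        mul_nonneg (by linarith [hs.2] : (0:ℝ) ≤ 1 - s) (h₂n i j)]
    have hxs : ∑ j, (β₂ i j + s * (β₁ i j - β₂ i j)) = 1 := by
      rw [Finset.sum_add_distrib, ← Finset.mul_sum, Finset.sum_sub_distrib,
        h₁r i, h₂r i]
      ring
    have hus : ∑ j, (β₁ i j - β₂ i j) = 0 := by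
      rw [Finset.sum_sub_distrib, h₁r i, h₂r i]
      ring
    have hrow := simplex_quad (fun j => β₂ i j + s * (β₁ i j - β₂ i j))
      (fun j => β₁ i j - β₂ i j) hx0 hxs hus
      (fun j hj => hbounds i j s hs hj)
    have hif : (∑ j, if 0 < p i j then
        (β₁ i j - β₂ i j) ^ 2 * (1 / (β₂ i j + s * (β₁ i j - β₂ i j))
          - 1 / (1 - (β₂ i j + s * (β₁ i j - β₂ i j)))) else 0)
        = ∑ j, ((β₁ i j - β₂ i j) ^ 2 * (1 / (β₂ i j + s * (β₁ i j - β₂ i j)))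
          - (β₁ i j - β₂ i j) ^ 2 * (1 / (1 - (β₂ i j + s * (β₁ i j - β₂ i j))))) := by
      refine Finset.sum_congr rfl fun j _ => ?_
      by_cases hp' : 0 < p i j
      · rw [if_pos hp']
        ring
      · rw [if_neg hp']
        have hp0 : p i j = 0 := le_antisymm (not_lt.mp hp') (hp i j)
        rw [h₁z i j hp0, h₂z i j hp0]
        ring
    rw [hif, Finset.sum_sub_distrib]
    exact sub_nonneg.mpr hrow
  have hconv : ConvexOn ℝ (Set.Icc (0:ℝ) 1) φ := by
    apply convexOn_of_hasDerivWithinAt2_nonneg (convex_Icc 0 1) hcont.continuousOn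
      (f' := φ') (f'' := φ'')
    · intro s hs
      rw [interior_Icc] at hs
      exact (hd1 s hs).hasDerivWithinAt
    · intro s hs
      rw [interior_Icc] at hs
      exact (hd2 s hs).hasDerivWithinAt
    · intro s hs
      rw [interior_Icc] at hs
      exact h2nn s hs
  have h01 : (1:ℝ) ∈ Set.Icc (0:ℝ) 1 := by norm_num
  have h00 : (0:ℝ) ∈ Set.Icc (0:ℝ) 1 := by norm_num
  have key := hconv.2 h01 h00 ht0 (by linarith : (0:ℝ) ≤ 1 - t) (by ring)
  simp only [smul_eq_mul, mul_one, mul_zero, add_zero] at key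
  have e1 : FBP p β₁ = φ 1 := by
    have h := hφ 1
    have hm : (1:ℝ) • β₁ + (1 - 1 : ℝ) • β₂ = β₁ := by
      norm_num
    rw [hm] at h
    exact h
  have e0 : FBP p β₂ = φ 0 := by
    have h := hφ 0
    have hm : (0:ℝ) • β₁ + (1 - 0 : ℝ) • β₂ = β₂ := by
      norm_num
    rw [hm] at h
    exact h
  rw [hφ t, e1, e0]
  exact key
end

section
/- Let p be an n×n real matrix with nonnegative entries such that the β-polytope 𝓑_p of p contains at least one point in its interior. Then the mean-field free energy F_MF(·|p) is strictly convex on 𝓑_p, it has a unique minimizer over 𝓑_p, and this minimizer lies in the interior of 𝓑_p. -/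
open scoped BigOperators

open Real Set Filter

namespace FMFaux

noncomputable def g (c x : ℝ) : ℝ := x * Real.log x + (1 - x) * Real.log (1 - x) - x * c

lemma g_cont (c : ℝ) : Continuous (g c) := by
  have h1 : Continuous fun x : ℝ => (1 - x) * Real.log (1 - x) :=
    Real.continuous_mul_log.comp (continuous_const.sub continuous_id)
  exact (Real.continuous_mul_log.add h1).sub (continuous_id.mul continuous_const)

lemma hasDerivAt_g (c : ℝ) {x : ℝ} (hx : x ∈ Ioo (0:ℝ) 1) :
    HasDerivAt (g c) (Real.log x - Real.log (1 - x) - c) x := by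
  have hx0 : x ≠ 0 := ne_of_gt hx.1
  have hx1 : (1 : ℝ) - x ≠ 0 := by have := hx.2; intro h; linarith [h]
  have h1 : HasDerivAt (fun y : ℝ => y * Real.log y) (Real.log x + 1) x :=
    Real.hasDerivAt_mul_log hx0
  have h2 : HasDerivAt (fun y : ℝ => (1 - y) * Real.log (1 - y))
      ((Real.log (1 - x) + 1) * (-1)) x := by
    have hinner : HasDerivAt (fun y : ℝ => 1 - y) (-1) x := by
      simpa using (hasDerivAt_id x).const_sub 1
    exact (Real.hasDerivAt_mul_log hx1).comp x hinner
  have h3 : HasDerivAt (fun y : ℝ => y * c) c x := by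
    simpa using (hasDerivAt_id x).mul_const c
  have := (h1.add h2).sub h3
  exact this.congr_deriv (by ring)

lemma g'_strictMono (c : ℝ) :
    StrictMonoOn (fun x => Real.log x - Real.log (1 - x) - c) (Ioo (0:ℝ) 1) := by
  intro x hx y hy hxy
  have h1 : Real.log x < Real.log y := Real.log_lt_log hx.1 hxy
  have h2 : Real.log (1 - y) < Real.log (1 - x) :=
    Real.log_lt_log (by linarith [hy.2]) (by linarith)
  simp only
  linarith

lemma g_strictConvex (c : ℝ) : StrictConvexOn ℝ (Icc (0:ℝ) 1) (g c) := by
  apply StrictMonoOn.strictConvexOn_of_deriv (convex_Icc 0 1) (g_cont c).continuousOn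
  rw [interior_Icc]
  intro x hx y hy hxy
  rw [(hasDerivAt_g c hx).deriv, (hasDerivAt_g c hy).deriv]
  exact g'_strictMono c hx hy hxy

lemma tangent (c : ℝ) {x a : ℝ} (hx : x ∈ Ioo (0:ℝ) 1) (ha : a ∈ Icc (0:ℝ) 1) :
    g c x + (Real.log x - Real.log (1 - x) - c) * (a - x) ≤ g c a := by
  set g' : ℝ → ℝ := fun y => Real.log y - Real.log (1 - y) - c with hg'
  rcases lt_trichotomy a x with h | h | h
  · obtain ⟨ξ, hξ, hslope⟩ := exists_hasDerivAt_eq_slope (g c) g' h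
      ((g_cont c).continuousOn)
      (fun y hy => hasDerivAt_g c ⟨lt_of_le_of_lt ha.1 hy.1, lt_trans hy.2 hx.2⟩)
    have hξmem : ξ ∈ Ioo (0:ℝ) 1 := ⟨lt_of_le_of_lt ha.1 hξ.1, lt_trans hξ.2 hx.2⟩
    have hmono : g' ξ ≤ g' x := le_of_lt (g'_strictMono c hξmem hx hξ.2)
    have hne : x - a ≠ 0 := by linarith
    have heq : g' ξ * (x - a) = g c x - g c a := (eq_div_iff hne).mp hslope
    have hgx : g' x = Real.log x - Real.log (1 - x) - c := rfl
    have hprod : g' ξ * (x - a) ≤ g' x * (x - a) :=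
      mul_le_mul_of_nonneg_right hmono (by linarith)
    rw [← hgx]
    nlinarith [heq, hprod]
  · rw [h, sub_self, mul_zero, add_zero]
  · obtain ⟨ξ, hξ, hslope⟩ := exists_hasDerivAt_eq_slope (g c) g' h
      ((g_cont c).continuousOn)
      (fun y hy => hasDerivAt_g c ⟨lt_trans hx.1 hy.1, lt_of_lt_of_le hy.2 ha.2⟩)
    have hξmem : ξ ∈ Ioo (0:ℝ) 1 := ⟨lt_trans hx.1 hξ.1, lt_of_lt_of_le hξ.2 ha.2⟩
    have hmono : g' x ≤ g' ξ := le_of_lt (g'_strictMono c hx hξmem hξ.1)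
    have hne : a - x ≠ 0 := by linarith
    have heq : g' ξ * (a - x) = g c a - g c x := (eq_div_iff hne).mp hslope
    have hgx : g' x = Real.log x - Real.log (1 - x) - c := rfl
    have hprod : g' x * (a - x) ≤ g' ξ * (a - x) :=
      mul_le_mul_of_nonneg_right hmono (by linarith)
    rw [← hgx]
    nlinarith [heq, hprod]

lemma entry_eq {p : ℝ} (hp : 0 < p) (x : ℝ) :
    x * Real.log (x / p) + (1 - x) * Real.log (1 - x) = g (Real.log p) x := by
  rcases eq_or_ne x 0 with h | h
  · simp [h, g]
  · rw [Real.log_div h (ne_of_gt hp)]; unfold g; ring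

end FMFaux

namespace FMFaux
open Filter Topology

lemma mix_mem_Ioo {a b t : ℝ} (ha : a ∈ Ioo (0:ℝ) 1) (hb : b ∈ Ioo (0:ℝ) 1)
    (ht : t ∈ Ioo (0:ℝ) 1) : t * b + (1 - t) * a ∈ Ioo (0:ℝ) 1 := by
  obtain ⟨ha0, ha1⟩ := ha; obtain ⟨hb0, hb1⟩ := hb; obtain ⟨ht0, ht1⟩ := ht
  constructor <;> nlinarith

lemma entryA (c : ℝ) {a b : ℝ} (ha : a ∈ Ioo (0:ℝ) 1) (hb : b ∈ Ioo (0:ℝ) 1) :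
    ∃ C, ∀ᶠ t in 𝓝[>] (0:ℝ), g c (t * b + (1 - t) * a) - g c a ≤ C * t := by
  set φ : ℝ → ℝ := fun t => (Real.log (t * b + (1 - t) * a)
      - Real.log (1 - (t * b + (1 - t) * a)) - c) * (b - a) with hφ
  have hxcont : Continuous fun t : ℝ => t * b + (1 - t) * a := by continuity
  have hx0 : (fun t : ℝ => t * b + (1 - t) * a) 0 = a := by norm_num
  have hφcont : ContinuousAt φ 0 := by
    have h1 : ContinuousAt (fun t : ℝ => Real.log (t * b + (1 - t) * a)) 0 :=
      (hxcont.continuousAt).log (by norm_num; exact ne_of_gt ha.1)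
    have h2 : ContinuousAt (fun t : ℝ => Real.log (1 - (t * b + (1 - t) * a))) 0 :=
      ((continuous_const.sub hxcont).continuousAt).log
        (by norm_num; exact ne_of_gt (by linarith [ha.2]))
    exact ((h1.sub h2).sub continuousAt_const).mul continuousAt_const
  refine ⟨φ 0 + 1, ?_⟩
  have hev1 : ∀ᶠ t in 𝓝[>] (0:ℝ), φ t < φ 0 + 1 :=
    (hφcont.tendsto.mono_left nhdsWithin_le_nhds).eventually_lt_const (by linarith)
  have hev2 : Ioo (0:ℝ) 1 ∈ 𝓝[>] (0:ℝ) := Ioo_mem_nhdsGT one_pos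
  filter_upwards [hev1, hev2] with t hφt ht
  have hxt : t * b + (1 - t) * a ∈ Ioo (0:ℝ) 1 := mix_mem_Ioo ha hb ht
  have htan := tangent c hxt (Ioo_subset_Icc_self ha)
  have hφt' : (Real.log (t * b + (1 - t) * a)
      - Real.log (1 - (t * b + (1 - t) * a)) - c) * (b - a) < φ 0 + 1 := hφt
  have hmul : t * ((Real.log (t * b + (1 - t) * a)
        - Real.log (1 - (t * b + (1 - t) * a)) - c) * (b - a)) ≤ t * (φ 0 + 1) :=
    mul_le_mul_of_nonneg_left (le_of_lt hφt') (le_of_lt ht.1)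
  nlinarith [htan, hmul]

lemma entryB (c : ℝ) {a b : ℝ} (ha : a = 0 ∨ a = 1) (hb : b ∈ Ioo (0:ℝ) 1) :
    ∃ C, ∀ᶠ t in 𝓝[>] (0:ℝ),
      g c (t * b + (1 - t) * a) - g c a ≤ min b (1 - b) * (t * Real.log t) + C * t := by
  obtain ⟨hb0, hb1⟩ := hb
  rcases ha with ha | ha
  · -- a = 0
    refine ⟨b * (Real.log b - Real.log (1 - b) - c), ?_⟩
    have hev2 : Ioo (0:ℝ) 1 ∈ 𝓝[>] (0:ℝ) := Ioo_mem_nhdsGT one_pos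
    filter_upwards [hev2] with t ht
    obtain ⟨ht0, ht1⟩ := ht
    subst ha
    have hxt : t * b + (1 - t) * 0 ∈ Ioo (0:ℝ) 1 := by constructor <;> nlinarith
    have htan := tangent c hxt (by constructor <;> norm_num : (0:ℝ) ∈ Icc (0:ℝ) 1)
    have hg0 : g c 0 = 0 := by simp [g]
    -- d ≤ g'(xt) * xt
    have hd : g c (t * b + (1 - t) * 0) - g c 0 ≤
        (Real.log (t * b + (1 - t) * 0) - Real.log (1 - (t * b + (1 - t) * 0)) - c)
          * (t * b + (1 - t) * 0) := by nlinarith [htan]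
    have hxeq : t * b + (1 - t) * 0 = t * b := by ring
    rw [hxeq] at hd ⊢
    have hlog : Real.log (t * b) = Real.log t + Real.log b :=
      Real.log_mul (ne_of_gt ht0) (ne_of_gt hb0)
    rw [hlog] at hd
    -- -log(1 - t*b) ≤ -log(1-b)
    have hlb : Real.log (1 - b) ≤ Real.log (1 - t * b) :=
      Real.log_le_log (by nlinarith) (by nlinarith)
    have htb : 0 < t * b := mul_pos ht0 hb0
    have step : g c (t * b) - g c 0 ≤
        (Real.log t + Real.log b - Real.log (1 - b) - c) * (t * b) := by
      nlinarith [hd, hlb, htb]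
    have hmin : min b (1 - b) ≤ b := min_le_left _ _
    have htlog : t * Real.log t ≤ 0 := by
      have : Real.log t ≤ 0 := Real.log_nonpos (le_of_lt ht0) (le_of_lt ht1)
      nlinarith
    calc g c (t * b) - g c 0
        ≤ (Real.log t + Real.log b - Real.log (1 - b) - c) * (t * b) := step
      _ = b * (t * Real.log t) + (b * (Real.log b - Real.log (1 - b) - c)) * t := by ring
      _ ≤ min b (1 - b) * (t * Real.log t) + (b * (Real.log b - Real.log (1 - b) - c)) * t := by
          nlinarith [mul_le_mul_of_nonpos_right hmin htlog]
  · -- a = 1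
    refine ⟨(1 - b) * (Real.log (1 - b) + c + Real.log 2), ?_⟩
    have hev2 : Ioo (0:ℝ) (1/2) ∈ 𝓝[>] (0:ℝ) := Ioo_mem_nhdsGT (by norm_num)
    filter_upwards [hev2] with t ht
    obtain ⟨ht0, ht1⟩ := ht
    subst ha
    have hxt : t * b + (1 - t) * 1 ∈ Ioo (0:ℝ) 1 := by constructor <;> nlinarith
    have htan := tangent c hxt (by constructor <;> norm_num : (1:ℝ) ∈ Icc (0:ℝ) 1)
    have hg1 : g c 1 = -c := by simp [g]
    set x : ℝ := t * b + (1 - t) * 1 with hxdef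
    have h1x : 1 - x = t * (1 - b) := by rw [hxdef]; ring
    have hd : g c x - g c 1 ≤
        (Real.log x - Real.log (1 - x) - c) * (x - 1) := by nlinarith [htan]
    have hs : 0 < t * (1 - b) := mul_pos ht0 (by linarith)
    have hlogs : Real.log (1 - x) = Real.log t + Real.log (1 - b) := by
      rw [h1x]; exact Real.log_mul (ne_of_gt ht0) (by linarith)
    -- lower bound on log x : x ≥ 1/2
    have hxhalf : (1/2 : ℝ) ≤ x := by rw [hxdef]; nlinarith
    have hlogx : Real.log (1/2 : ℝ) ≤ Real.log x := Real.log_le_log (by norm_num) hxhalf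
    have hhalf : Real.log (1/2 : ℝ) = -Real.log 2 := by
      rw [Real.log_div one_ne_zero two_ne_zero, Real.log_one]; ring
    have hx1 : x - 1 = -(t * (1 - b)) := by rw [hxdef]; ring
    have step : g c x - g c 1 ≤
        (Real.log t + Real.log (1 - b) + c + Real.log 2) * (t * (1 - b)) := by
      rw [hx1] at hd
      rw [hlogs] at hd
      nlinarith [hd, hlogx, hhalf ▸ hlogx, hs]
    have hmin : min b (1 - b) ≤ 1 - b := min_le_right _ _
    have htlog : t * Real.log t ≤ 0 := by
      have : Real.log t ≤ 0 := Real.log_nonpos (le_of_lt ht0) (by linarith)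
      nlinarith
    calc g c x - g c 1
        ≤ (Real.log t + Real.log (1 - b) + c + Real.log 2) * (t * (1 - b)) := step
      _ = (1 - b) * (t * Real.log t)
          + ((1 - b) * (Real.log (1 - b) + c + Real.log 2)) * t := by ring
      _ ≤ min b (1 - b) * (t * Real.log t)
          + ((1 - b) * (Real.log (1 - b) + c + Real.log 2)) * t := by
          nlinarith [mul_le_mul_of_nonpos_right hmin htlog]

end FMFaux

namespace FMFaux
open Filter Topology

variable {n : ℕ}

lemma entryB' (c : ℝ) {a b : ℝ} (ha : a = 0 ∨ a = 1) (hb : b ∈ Ioo (0:ℝ) 1) :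
    ∃ C, ∀ᶠ t in 𝓝[>] (0:ℝ), g c (t * b + (1 - t) * a) - g c a ≤ C * t := by
  obtain ⟨C, hC⟩ := entryB c ha hb
  refine ⟨C, ?_⟩
  filter_upwards [hC, Ioo_mem_nhdsGT (one_pos (α := ℝ))] with t hCt ht
  have hlt : Real.log t ≤ 0 := Real.log_nonpos ht.1.le ht.2.le
  have htl : t * Real.log t ≤ 0 := by nlinarith [ht.1.le]
  have hm : (0:ℝ) ≤ min b (1 - b) := le_min hb.1.le (by linarith [hb.2])
  nlinarith [hCt, mul_nonneg hm (neg_nonneg.mpr htl)]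

lemma entry_mem_Icc {β : Matrix (Fin n) (Fin n) ℝ} (h : DoublyStochastic β) (i j : Fin n) :
    β i j ∈ Set.Icc (0:ℝ) 1 := by
  refine ⟨h.1 i j, ?_⟩
  calc β i j ≤ ∑ j', β i j' :=
        Finset.single_le_sum (fun j' _ => h.1 i j') (Finset.mem_univ j)
    _ = 1 := h.2.1 i

lemma FMF_eq (p β : Matrix (Fin n) (Fin n) ℝ) :
    FMF p β = ∑ ij : Fin n × Fin n,
      (if 0 < p ij.1 ij.2 then g (Real.log (p ij.1 ij.2)) (β ij.1 ij.2) else 0) := by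
  rw [FMF, Fintype.sum_prod_type]
  refine Finset.sum_congr rfl fun i _ => Finset.sum_congr rfl fun j _ => ?_
  by_cases hij : 0 < p i j
  · simp only [hij, if_true]; exact entry_eq hij _
  · simp [hij]

lemma combo_apply (β₁ β₂ : Matrix (Fin n) (Fin n) ℝ) (t : ℝ) (i j : Fin n) :
    (t • β₁ + (1 - t) • β₂) i j = t * β₁ i j + (1 - t) * β₂ i j := by
  simp [Matrix.add_apply, Matrix.smul_apply, smul_eq_mul]

lemma combo_mem {p β₁ β₂ : Matrix (Fin n) (Fin n) ℝ} {t : ℝ}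
    (h₁ : InPolytope p β₁) (h₂ : InPolytope p β₂) (ht0 : 0 ≤ t) (ht1 : t ≤ 1) :
    InPolytope p (t • β₁ + (1 - t) • β₂) := by
  obtain ⟨⟨h1n, h1r, h1c⟩, h1z⟩ := h₁
  obtain ⟨⟨h2n, h2r, h2c⟩, h2z⟩ := h₂
  refine ⟨⟨fun i j => ?_, fun i => ?_, fun j => ?_⟩, fun i j hpij => ?_⟩
  · rw [combo_apply]
    exact add_nonneg (mul_nonneg ht0 (h1n i j)) (mul_nonneg (by linarith) (h2n i j))
  · simp only [combo_apply]
    rw [Finset.sum_add_distrib, ← Finset.mul_sum, ← Finset.mul_sum, h1r i, h2r i]; ring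
  · simp only [combo_apply]
    rw [Finset.sum_add_distrib, ← Finset.mul_sum, ← Finset.mul_sum, h1c j, h2c j]; ring
  · rw [combo_apply, h1z i j hpij, h2z i j hpij]; ring

lemma strict_part {p : Matrix (Fin n) (Fin n) ℝ} (hp : ∀ i j, 0 ≤ p i j)
    {β₁ β₂ : Matrix (Fin n) (Fin n) ℝ} (h₁ : InPolytope p β₁) (h₂ : InPolytope p β₂)
    (hne : β₁ ≠ β₂) {t : ℝ} (ht0 : 0 < t) (ht1 : t < 1) :
    FMF p (t • β₁ + (1 - t) • β₂) < t * FMF p β₁ + (1 - t) * FMF p β₂ := by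
  rw [FMF_eq, FMF_eq, FMF_eq, Finset.mul_sum, Finset.mul_sum, ← Finset.sum_add_distrib]
  have key : ∃ i j, β₁ i j ≠ β₂ i j := by
    by_contra h; push_neg at h; exact hne (by ext i j; exact h i j)
  obtain ⟨i0, j0, hij0⟩ := key
  have hp0 : 0 < p i0 j0 := by
    rcases (hp i0 j0).lt_or_eq with h | h
    · exact h
    · exact absurd (by rw [h₁.2 i0 j0 h.symm, h₂.2 i0 j0 h.symm]) hij0
  apply Finset.sum_lt_sum
  · intro ij _
    by_cases hpij : 0 < p ij.1 ij.2
    · simp only [hpij, if_true, combo_apply]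
      have := ((g_strictConvex (Real.log (p ij.1 ij.2))).convexOn).2
        (entry_mem_Icc h₁.1 ij.1 ij.2) (entry_mem_Icc h₂.1 ij.1 ij.2)
        (le_of_lt ht0) (show (0:ℝ) ≤ 1 - t by linarith) (show t + (1 - t) = 1 by ring)
      simpa [smul_eq_mul] using this
    · simp [hpij]
  · refine ⟨(i0, j0), Finset.mem_univ _, ?_⟩
    simp only [hp0, if_true, combo_apply]
    have := (g_strictConvex (Real.log (p i0 j0))).2
      (entry_mem_Icc h₁.1 i0 j0) (entry_mem_Icc h₂.1 i0 j0) hij0 ht0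
      (show (0:ℝ) < 1 - t by linarith) (show t + (1 - t) = 1 by ring)
    simpa [smul_eq_mul] using this

lemma polytope_isCompact (p : Matrix (Fin n) (Fin n) ℝ) :
    IsCompact {β : Matrix (Fin n) (Fin n) ℝ | InPolytope p β} := by
  have capp : ∀ (i j : Fin n), Continuous fun β : Matrix (Fin n) (Fin n) ℝ => β i j :=
    fun i j => (continuous_apply j).comp (continuous_apply i)
  have hclosed : IsClosed {β : Matrix (Fin n) (Fin n) ℝ | InPolytope p β} := by
    have he : {β : Matrix (Fin n) (Fin n) ℝ | InPolytope p β} =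
        (⋂ i, ⋂ j, {β : Matrix (Fin n) (Fin n) ℝ | 0 ≤ β i j}) ∩
        ((⋂ i, {β : Matrix (Fin n) (Fin n) ℝ | ∑ j, β i j = 1}) ∩
        ((⋂ j, {β : Matrix (Fin n) (Fin n) ℝ | ∑ i, β i j = 1}) ∩
        (⋂ i, ⋂ j, {β : Matrix (Fin n) (Fin n) ℝ | p i j = 0 → β i j = 0}))) := by
      ext β
      simp only [Set.mem_setOf_eq, Set.mem_inter_iff, Set.mem_iInter, InPolytope,
        DoublyStochastic]
      tauto
    rw [he]
    refine IsClosed.inter ?_ (IsClosed.inter ?_ (IsClosed.inter ?_ ?_))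
    · exact isClosed_iInter fun i => isClosed_iInter fun j =>
        isClosed_le continuous_const (capp i j)
    · exact isClosed_iInter fun i =>
        isClosed_eq (continuous_finset_sum _ fun j _ => capp i j) continuous_const
    · exact isClosed_iInter fun j =>
        isClosed_eq (continuous_finset_sum _ fun i _ => capp i j) continuous_const
    · refine isClosed_iInter fun i => isClosed_iInter fun j => ?_
      by_cases hpij : p i j = 0
      · simp only [hpij, forall_true_left]
        exact isClosed_eq (capp i j) continuous_const
      · simp only [hpij]
        convert isClosed_univ
        ext β; simp [hpij]
  have hcomp : IsCompact ((Set.univ.pi fun _ : Fin n =>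
      Set.univ.pi fun _ : Fin n => Icc (0:ℝ) 1) : Set (Matrix (Fin n) (Fin n) ℝ)) :=
    isCompact_univ_pi fun _ : Fin n =>
      isCompact_univ_pi fun _ : Fin n => isCompact_Icc (a := (0:ℝ)) (b := 1)
  refine hcomp.of_isClosed_subset hclosed ?_
  intro β hβ
  rw [Set.mem_univ_pi]
  intro i
  rw [Set.mem_univ_pi]
  intro j
  exact entry_mem_Icc hβ.1 i j

lemma FMF_continuous (p : Matrix (Fin n) (Fin n) ℝ) :
    Continuous fun β : Matrix (Fin n) (Fin n) ℝ => FMF p β := by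
  have he : (fun β : Matrix (Fin n) (Fin n) ℝ => FMF p β) =
      fun β => ∑ ij : Fin n × Fin n,
        (if 0 < p ij.1 ij.2 then g (Real.log (p ij.1 ij.2)) (β ij.1 ij.2) else 0) :=
    funext fun β => FMF_eq p β
  rw [he]
  apply continuous_finset_sum
  intro ij _
  by_cases hpij : 0 < p ij.1 ij.2
  · simp only [hpij, if_true]
    exact (g_cont _).comp ((continuous_apply ij.2).comp (continuous_apply ij.1))
  · simp only [hpij, if_false]
    exact continuous_const

end FMFaux

theorem FMF_strictConvex_unique_interior_min {n : ℕ}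
    (p : Matrix (Fin n) (Fin n) ℝ) (hp : ∀ i j, 0 ≤ p i j)
    (hint : ∃ β, InInterior p β) :
    (∀ β₁ β₂ : Matrix (Fin n) (Fin n) ℝ, InPolytope p β₁ → InPolytope p β₂ →
        β₁ ≠ β₂ → ∀ t : ℝ, 0 < t → t < 1 →
        FMF p (t • β₁ + (1 - t) • β₂) < t * FMF p β₁ + (1 - t) * FMF p β₂) ∧
    (∃ β₀, InInterior p β₀ ∧ (∀ β, InPolytope p β → FMF p β₀ ≤ FMF p β) ∧
      ∀ β', InPolytope p β' → (∀ β, InPolytope p β → FMF p β' ≤ FMF p β) →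
        β' = β₀) := by
  classical
  open FMFaux Set Filter Topology in
  refine ⟨fun β₁ β₂ h₁ h₂ hne t ht0 ht1 => strict_part hp h₁ h₂ hne ht0 ht1, ?_⟩
  obtain ⟨βh, hβh⟩ := hint
  obtain ⟨β₀, hβ₀K, hmin⟩ := (polytope_isCompact p).exists_isMinOn ⟨βh, hβh.1⟩
    (FMF_continuous p).continuousOn
  have hβ₀K : InPolytope p β₀ := hβ₀K
  have hminle : ∀ β, InPolytope p β → FMF p β₀ ≤ FMF p β := fun β hβ => hmin hβ
  -- per-entry difference function
  set d : Fin n × Fin n → ℝ → ℝ := fun ij t =>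
    (if 0 < p ij.1 ij.2 then
      g (Real.log (p ij.1 ij.2)) ((t • βh + (1 - t) • β₀) ij.1 ij.2) else 0)
    - (if 0 < p ij.1 ij.2 then g (Real.log (p ij.1 ij.2)) (β₀ ij.1 ij.2) else 0) with hd
  have hdiff : ∀ t : ℝ, FMF p (t • βh + (1 - t) • β₀) - FMF p β₀
      = ∑ ij : Fin n × Fin n, d ij t := by
    intro t
    rw [FMF_eq, FMF_eq, ← Finset.sum_sub_distrib]
  have hβ₀int : InInterior p β₀ := by
    by_contra hnot
    have h2 : ¬ ∀ i j, 0 < p i j → 0 < β₀ i j ∧ β₀ i j < 1 := fun h => hnot ⟨hβ₀K, h⟩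
    push_neg at h2
    obtain ⟨i0, j0, hp0, hbad⟩ := h2
    have hicc := entry_mem_Icc hβ₀K.1 i0 j0
    have hbd : β₀ i0 j0 = 0 ∨ β₀ i0 j0 = 1 := by
      by_cases h0 : β₀ i0 j0 = 0
      · exact Or.inl h0
      · have hpos : 0 < β₀ i0 j0 := lt_of_le_of_ne hicc.1 (Ne.symm h0)
        exact Or.inr (le_antisymm hicc.2 (hbad hpos))
    have hb0 : βh i0 j0 ∈ Ioo (0:ℝ) 1 := ⟨(hβh.2 i0 j0 hp0).1, (hβh.2 i0 j0 hp0).2⟩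
    set e0 : ℝ := min (βh i0 j0) (1 - βh i0 j0) with he0
    have he0pos : 0 < e0 := lt_min hb0.1 (by linarith [hb0.2])
    -- bad-entry bound
    obtain ⟨C0, hC0⟩ := entryB (Real.log (p i0 j0)) hbd hb0
    have hC0' : ∀ᶠ t in 𝓝[>] (0:ℝ),
        d (i0, j0) t ≤ e0 * (t * Real.log t) + C0 * t := by
      filter_upwards [hC0] with t hCt
      simp only [hd, hp0, if_true]
      rw [combo_apply]
      exact hCt
    -- all-entry linear bounds
    have hA : ∀ ij : Fin n × Fin n, ∃ C, ∀ᶠ t in 𝓝[>] (0:ℝ), d ij t ≤ C * t := by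
      intro ij
      by_cases hpij : 0 < p ij.1 ij.2
      · have hb : βh ij.1 ij.2 ∈ Ioo (0:ℝ) 1 :=
          ⟨(hβh.2 ij.1 ij.2 hpij).1, (hβh.2 ij.1 ij.2 hpij).2⟩
        have ha' := entry_mem_Icc hβ₀K.1 ij.1 ij.2
        have key : ∃ C, ∀ᶠ t in 𝓝[>] (0:ℝ),
            g (Real.log (p ij.1 ij.2)) (t * βh ij.1 ij.2 + (1 - t) * β₀ ij.1 ij.2)
              - g (Real.log (p ij.1 ij.2)) (β₀ ij.1 ij.2) ≤ C * t := by
          rcases eq_or_lt_of_le ha'.1 with h0 | h0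
          · exact entryB' _ (Or.inl h0.symm) hb
          · rcases eq_or_lt_of_le ha'.2 with h1 | h1
            · exact entryB' _ (Or.inr h1) hb
            · exact entryA _ ⟨h0, h1⟩ hb
        obtain ⟨C, hC⟩ := key
        refine ⟨C, ?_⟩
        filter_upwards [hC] with t hCt
        simp only [hd, hpij, if_true]
        rw [combo_apply]
        exact hCt
      · exact ⟨0, by filter_upwards with t; simp [hd, hpij]⟩
    choose Cf hCf using hA
    set S : Finset (Fin n × Fin n) := Finset.univ with hS
    set S' : Finset (Fin n × Fin n) := S.erase (i0, j0) with hS'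
    set Ctot : ℝ := C0 + ∑ ij ∈ S', Cf ij with hCtot
    have hall : ∀ᶠ t in 𝓝[>] (0:ℝ), ∀ ij ∈ S', d ij t ≤ Cf ij * t :=
      (Filter.eventually_all_finset S').mpr fun ij _ => hCf ij
    have hneg : ∀ᶠ t in 𝓝[>] (0:ℝ), e0 * Real.log t + Ctot < 0 := by
      have hlog := Real.tendsto_log_nhdsGT_zero
      have h2 : ∀ᶠ t in 𝓝[>] (0:ℝ), Real.log t < (-Ctot - 1) / e0 :=
        hlog.eventually (eventually_lt_atBot _)
      filter_upwards [h2] with t ht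
      have hmul : e0 * Real.log t < e0 * ((-Ctot - 1) / e0) :=
        mul_lt_mul_of_pos_left ht he0pos
      have heq : e0 * ((-Ctot - 1) / e0) = -Ctot - 1 := by field_simp
      linarith
    have hfin : ∀ᶠ t in 𝓝[>] (0:ℝ),
        FMF p (t • βh + (1 - t) • β₀) < FMF p β₀ := by
      filter_upwards [hC0', hall, hneg, Ioo_mem_nhdsGT (one_pos (α := ℝ))]
        with t h1 h2 h3 ht
      have hsum : ∑ ij ∈ S', d ij t ≤ (∑ ij ∈ S', Cf ij) * t := by
        rw [Finset.sum_mul]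
        exact Finset.sum_le_sum fun ij hij => h2 ij hij
      have hsplit : ∑ ij : Fin n × Fin n, d ij t = d (i0, j0) t + ∑ ij ∈ S', d ij t :=
        (Finset.add_sum_erase S (fun ij => d ij t) (Finset.mem_univ _)).symm
      have htot : FMF p (t • βh + (1 - t) • β₀) - FMF p β₀
          ≤ e0 * (t * Real.log t) + Ctot * t := by
        rw [hdiff t, hsplit, hCtot]
        have := add_le_add h1 hsum
        linarith
      have hneg2 : e0 * (t * Real.log t) + Ctot * t < 0 := by
        have : t * (e0 * Real.log t + Ctot) < 0 := mul_neg_of_pos_of_neg ht.1 h3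
        nlinarith [this]
      linarith
    have hIoo : ∀ᶠ t in 𝓝[>] (0:ℝ), t ∈ Ioo (0:ℝ) 1 :=
      Filter.eventually_of_mem (Ioo_mem_nhdsGT (one_pos (α := ℝ))) fun t ht => ht
    obtain ⟨t, ht, htIoo⟩ := (hfin.and hIoo).exists
    have hKt : InPolytope p (t • βh + (1 - t) • β₀) :=
      combo_mem hβh.1 hβ₀K htIoo.1.le htIoo.2.le
    exact absurd (hminle _ hKt) (not_le.mpr ht)
  refine ⟨β₀, hβ₀int, hminle, ?_⟩
  intro β' hβ' hβ'min
  by_contra hne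
  have h1 : FMF p β' = FMF p β₀ := le_antisymm (hβ'min _ hβ₀K) (hminle _ hβ')
  have hmid := strict_part hp hβ' hβ₀K hne (t := (1/2 : ℝ)) (by norm_num) (by norm_num)
  have hmidK : InPolytope p ((1/2 : ℝ) • β' + (1 - 1/2 : ℝ) • β₀) :=
    combo_mem hβ' hβ₀K (by norm_num) (by norm_num)
  have h2 := hminle _ hmidK
  rw [h1] at hmid
  norm_num at hmid
  linarith
end

section
/- Let p be an n×n real matrix with nonnegative entries. Suppose β lies in the interior of the β-polytope 𝓑_p of p and solves the mean-field equations for p. Then perm(p) = Z_MF(β|p) · perm(N) · ∏_{(i,j): p_ij>0} (1−β_ij), where N is the n×n matrix with entries N_ij = β_ij/(1−β_ij) for p_ij > 0 and N_ij = 0 for p_ij = 0. -/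
open scoped BigOperators

theorem permanent_MF_exact {n : ℕ} (p β : Matrix (Fin n) (Fin n) ℝ)
    (hp : ∀ i j, 0 ≤ p i j) (hβ : InInterior p β)
    (hMF : ∃ v w : Fin n → ℝ, (∀ i, 0 < v i) ∧ (∀ j, 0 < w j) ∧
      ∀ i j, β i j / (1 - β i j) = p i j / (v i * w j)) :
    permanent p = Real.exp (-(FMF p β)) *
      permanent (fun i j => if 0 < p i j then β i j / (1 - β i j) else 0) *
      ∏ i, ∏ j, (if 0 < p i j then 1 - β i j else 1) := by
  classical
  obtain ⟨v, w, hv, hw, hvw⟩ := hMF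
  obtain ⟨⟨⟨hβ0, hrow, hcol⟩, hβz⟩, hint⟩ := hβ
  have hp0 : ∀ i j, ¬ 0 < p i j → p i j = 0 := fun i j h =>
    le_antisymm (not_lt.mp h) (hp i j)
  have hβ00 : ∀ i j, ¬ 0 < p i j → β i j = 0 := fun i j h => hβz i j (hp0 i j h)
  -- N entries
  have hA : ∀ i j, (if 0 < p i j then β i j / (1 - β i j) else 0)
      = p i j * (v i)⁻¹ * (w j)⁻¹ := by
    intro i j
    by_cases h : 0 < p i j
    · rw [if_pos h, hvw i j, div_eq_mul_inv, mul_inv, ← mul_assoc]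
    · rw [if_neg h, hp0 i j h, zero_mul, zero_mul]
  have hN : permanent (fun i j => if 0 < p i j then β i j / (1 - β i j) else 0)
      = permanent p * ((∏ i, (v i)⁻¹) * ∏ j, (w j)⁻¹) := by
    unfold permanent
    rw [Finset.sum_mul]
    refine Finset.sum_congr rfl fun σ _ => ?_
    calc (∏ i, if 0 < p i (σ i) then β i (σ i) / (1 - β i (σ i)) else 0)
        = ∏ i, (p i (σ i) * (v i)⁻¹ * (w (σ i))⁻¹) :=
          Finset.prod_congr rfl fun i _ => hA i (σ i)
      _ = (∏ i, p i (σ i)) * ((∏ i, (v i)⁻¹) * ∏ i, (w (σ i))⁻¹) := by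
          rw [Finset.prod_mul_distrib, Finset.prod_mul_distrib, mul_assoc]
      _ = (∏ i, p i (σ i)) * ((∏ i, (v i)⁻¹) * ∏ j, (w j)⁻¹) := by
          rw [Equiv.prod_comp σ fun j => (w j)⁻¹]
  -- per-entry identity
  have hE : ∀ i j, Real.exp (-(if 0 < p i j then
        β i j * Real.log (β i j / p i j) + (1 - β i j) * Real.log (1 - β i j) else 0))
      * (if 0 < p i j then 1 - β i j else 1)
      = Real.exp (β i j * (Real.log (v i) + Real.log (w j))) := by
    intro i j
    by_cases h : 0 < p i j
    · obtain ⟨hb0, hb1⟩ := hint i j h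
      have h1b : 0 < 1 - β i j := by linarith
      rw [if_pos h, if_pos h,
        show Real.exp (-(β i j * Real.log (β i j / p i j)
            + (1 - β i j) * Real.log (1 - β i j))) * (1 - β i j)
          = Real.exp (-(β i j * Real.log (β i j / p i j)
            + (1 - β i j) * Real.log (1 - β i j)) + Real.log (1 - β i j)) from by
          rw [Real.exp_add, Real.exp_log h1b],
        Real.exp_eq_exp]
      have heq : β i j * (v i * w j) = p i j * (1 - β i j) := by
        have h0 := hvw i j
        rw [div_eq_div_iff h1b.ne' (mul_pos (hv i) (hw j)).ne'] at h0
        linarith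
      have hsum : Real.log (v i) + Real.log (w j)
          = Real.log (p i j) + Real.log (1 - β i j) - Real.log (β i j) := by
        have h2 : v i * w j = p i j * (1 - β i j) / β i j := by
          field_simp
          linarith [heq]
        rw [← Real.log_mul (hv i).ne' (hw j).ne', h2,
          Real.log_div (mul_ne_zero h.ne' h1b.ne') hb0.ne',
          Real.log_mul h.ne' h1b.ne']
      rw [Real.log_div hb0.ne' h.ne', hsum]
      ring
    · rw [if_neg h, if_neg h, hβ00 i j h]
      simp
  -- combine: exp(-FMF) * ∏∏ (1-β) = ∏ v * ∏ w
  have key : Real.exp (-(FMF p β)) *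
      (∏ i, ∏ j, (if 0 < p i j then 1 - β i j else 1)) = (∏ i, v i) * ∏ j, w j := by
    have h1 : -(FMF p β) = ∑ i, ∑ j, -(if 0 < p i j then
        β i j * Real.log (β i j / p i j) + (1 - β i j) * Real.log (1 - β i j) else 0) := by
      unfold FMF
      rw [← Finset.sum_neg_distrib]
      exact Finset.sum_congr rfl fun i _ => (Finset.sum_neg_distrib _).symm
    calc Real.exp (-(FMF p β)) * (∏ i, ∏ j, (if 0 < p i j then 1 - β i j else 1))
        = (∏ i, ∏ j, Real.exp (-(if 0 < p i j then
            β i j * Real.log (β i j / p i j) + (1 - β i j) * Real.log (1 - β i j) else 0)))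
          * (∏ i, ∏ j, (if 0 < p i j then 1 - β i j else 1)) := by
          rw [h1, Real.exp_sum]
          congr 1
          exact Finset.prod_congr rfl fun i _ => Real.exp_sum _ _
      _ = ∏ i, ∏ j, (Real.exp (-(if 0 < p i j then
            β i j * Real.log (β i j / p i j) + (1 - β i j) * Real.log (1 - β i j) else 0))
            * (if 0 < p i j then 1 - β i j else 1)) := by
          rw [← Finset.prod_mul_distrib]
          exact Finset.prod_congr rfl fun i _ => (Finset.prod_mul_distrib).symm
      _ = ∏ i, ∏ j, Real.exp (β i j * (Real.log (v i) + Real.log (w j))) := by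
          exact Finset.prod_congr rfl fun i _ => Finset.prod_congr rfl fun j _ => hE i j
      _ = Real.exp (∑ i, ∑ j, β i j * (Real.log (v i) + Real.log (w j))) := by
          rw [Real.exp_sum]
          exact Finset.prod_congr rfl fun i _ => (Real.exp_sum _ _).symm
      _ = (∏ i, v i) * ∏ j, w j := by
          have hs : (∑ i, ∑ j, β i j * (Real.log (v i) + Real.log (w j)))
              = (∑ i, Real.log (v i)) + ∑ j, Real.log (w j) := by
            have : ∀ i, ∑ j, β i j * (Real.log (v i) + Real.log (w j))
                = Real.log (v i) + ∑ j, β i j * Real.log (w j) := by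
              intro i
              rw [Finset.sum_congr rfl fun j _ => mul_add (β i j) _ _,
                Finset.sum_add_distrib, ← Finset.sum_mul, hrow i, one_mul]
            rw [Finset.sum_congr rfl fun i _ => this i, Finset.sum_add_distrib]
            congr 1
            rw [Finset.sum_comm]
            exact Finset.sum_congr rfl fun j _ => by
              rw [← Finset.sum_mul, hcol j, one_mul]
          rw [hs, Real.exp_add, Real.exp_sum, Real.exp_sum]
          congr 1
          · exact Finset.prod_congr rfl fun i _ => Real.exp_log (hv i)
          · exact Finset.prod_congr rfl fun j _ => Real.exp_log (hw j)
  rw [hN, mul_comm (Real.exp (-(FMF p β))) _, mul_assoc, mul_assoc, key,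
    Finset.prod_inv_distrib, Finset.prod_inv_distrib]
  have hvne : (∏ i, v i) ≠ 0 := (Finset.prod_pos fun i _ => hv i).ne'
  have hwne : (∏ j, w j) ≠ 0 := (Finset.prod_pos fun j _ => hw j).ne'
  field_simp
end

section
/- Let p be an n×n real matrix with nonnegative entries and let γ ∈ [−1,1]. Suppose β lies in the interior of the β-polytope 𝓑_p of p and solves the γ-fractional equations for p. Then perm(p) = Z_f^γ(β|p) · perm(N) · ∏_{(i,j): p_ij>0} (1−β_ij)^γ, where N is the n×n matrix with entries N_ij = β_ij/(1−β_ij)^γ for p_ij > 0 and N_ij = 0 for p_ij = 0. -/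
open scoped BigOperators

theorem permanent_fractional_exact {n : ℕ} (γ : ℝ)
    (hγ : γ ∈ Set.Icc (-1 : ℝ) 1)
    (p β : Matrix (Fin n) (Fin n) ℝ)
    (hp : ∀ i j, 0 ≤ p i j) (hβ : InInterior p β)
    (hFrac : ∃ w w' : Fin n → ℝ, (∀ i, 0 < w i) ∧ (∀ j, 0 < w' j) ∧
      ∀ i j, β i j / (1 - β i j) ^ γ = p i j / (w i * w' j)) :
    permanent p = Real.exp (-(Ff γ p β)) *
      permanent (fun i j => if 0 < p i j then β i j / (1 - β i j) ^ γ else 0) *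
      ∏ i, ∏ j, (if 0 < p i j then (1 - β i j) ^ γ else 1) := by
  obtain ⟨w, w', hw, hw', hfrac⟩ := hFrac
  obtain ⟨⟨⟨hβ0, hrow, hcol⟩, hzero⟩, hint⟩ := hβ
  set N : Matrix (Fin n) (Fin n) ℝ :=
    fun i j => if 0 < p i j then β i j / (1 - β i j) ^ γ else 0 with hN
  -- p factorizes through N
  have hpN : ∀ i j, p i j = w i * w' j * N i j := by
    intro i j
    by_cases h : 0 < p i j
    · have hwi := (hw i).ne'
      have hwj := (hw' j).ne'
      simp only [hN, if_pos h]
      rw [hfrac i j]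
      field_simp
    · have hp0 : p i j = 0 := le_antisymm (not_lt.mp h) (hp i j)
      simp [hN, h, hp0]
  have hperm : permanent p = (∏ i, w i) * (∏ j, w' j) * permanent N := by
    unfold permanent
    rw [Finset.mul_sum]
    apply Finset.sum_congr rfl
    intro σ _
    calc ∏ i, p i (σ i) = ∏ i, (w i * w' (σ i) * N i (σ i)) :=
          Finset.prod_congr rfl fun i _ => hpN i (σ i)
      _ = ((∏ i, w i) * ∏ i, w' (σ i)) * ∏ i, N i (σ i) := by
          rw [Finset.prod_mul_distrib, Finset.prod_mul_distrib]
      _ = (∏ i, w i) * (∏ j, w' j) * ∏ i, N i (σ i) := by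
          rw [Equiv.prod_comp σ w']
  -- log identity from the fractional equations
  have hlog : ∀ i j, 0 < p i j →
      Real.log (β i j) - γ * Real.log (1 - β i j)
        = Real.log (p i j) - (Real.log (w i) + Real.log (w' j)) := by
    intro i j h
    have hb := hint i j h
    have h1 : (0:ℝ) < β i j := hb.1
    have h2 : (0:ℝ) < 1 - β i j := by linarith [hb.2]
    have hl := congrArg Real.log (hfrac i j)
    rwa [Real.log_div h1.ne' (Real.rpow_pos_of_pos h2 γ).ne', Real.log_rpow h2,
      Real.log_div h.ne' (mul_pos (hw i) (hw' j)).ne',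
      Real.log_mul (hw i).ne' (hw' j).ne'] at hl
  set S : ℝ := ∑ i, ∑ j, if 0 < p i j then Real.log (1 - β i j) else 0 with hS
  -- termwise rewriting of the free energy
  have hterm : ∀ i j,
      (if 0 < p i j then
        β i j * Real.log (β i j / p i j) + γ * ((1 - β i j) * Real.log (1 - β i j))
      else 0)
      = γ * (if 0 < p i j then Real.log (1 - β i j) else 0)
          - β i j * (Real.log (w i) + Real.log (w' j)) := by
    intro i j
    by_cases h : 0 < p i j
    · simp only [if_pos h]
      have hb := hint i j h
      have h1 : (0:ℝ) < β i j := hb.1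
      have hl := hlog i j h
      rw [Real.log_div h1.ne' h.ne']
      have key : Real.log (β i j) - Real.log (p i j)
          = γ * Real.log (1 - β i j) - (Real.log (w i) + Real.log (w' j)) := by
        linarith
      have expand : β i j * (Real.log (β i j) - Real.log (p i j))
          + γ * ((1 - β i j) * Real.log (1 - β i j))
          = γ * Real.log (1 - β i j) - β i j * (Real.log (w i) + Real.log (w' j)) := by
        rw [key]; ring
      linarith [expand]
    · have hb0 : β i j = 0 := hzero i j (le_antisymm (not_lt.mp h) (hp i j))
      simp [h, hb0]
  have hFf : Ff γ p β = γ * S - ((∑ i, Real.log (w i)) + ∑ j, Real.log (w' j)) := by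
    unfold Ff
    have : (∑ i, ∑ j, if 0 < p i j then
        β i j * Real.log (β i j / p i j) + γ * ((1 - β i j) * Real.log (1 - β i j))
      else 0)
        = ∑ i, ∑ j, (γ * (if 0 < p i j then Real.log (1 - β i j) else 0)
            - β i j * (Real.log (w i) + Real.log (w' j))) := by
      exact Finset.sum_congr rfl fun i _ => Finset.sum_congr rfl fun j _ => hterm i j
    rw [this]
    simp only [Finset.sum_sub_distrib, ← Finset.mul_sum, mul_add]
    have h1 : ∑ i, ∑ j, β i j * Real.log (w i) = ∑ i, Real.log (w i) := by
      apply Finset.sum_congr rfl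
      intro i _
      rw [← Finset.sum_mul, hrow i, one_mul]
    have h2 : ∑ i, ∑ j, β i j * Real.log (w' j) = ∑ j, Real.log (w' j) := by
      rw [Finset.sum_comm]
      apply Finset.sum_congr rfl
      intro j _
      rw [← Finset.sum_mul, hcol j, one_mul]
    simp only [Finset.sum_add_distrib, h1, h2, hS]
  have hprodpow : (∏ i, ∏ j, (if 0 < p i j then (1 - β i j) ^ γ else 1))
      = Real.exp (γ * S) := by
    have : (∏ i, ∏ j, (if 0 < p i j then (1 - β i j) ^ γ else 1))
        = ∏ i, ∏ j, Real.exp (γ * (if 0 < p i j then Real.log (1 - β i j) else 0)) := by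
      apply Finset.prod_congr rfl
      intro i _
      apply Finset.prod_congr rfl
      intro j _
      by_cases h : 0 < p i j
      · have hb := hint i j h
        have h2 : (0:ℝ) < 1 - β i j := by linarith [hb.2]
        rw [if_pos h, if_pos h, Real.rpow_def_of_pos h2, mul_comm]
      · simp [h]
    rw [this, hS]
    simp only [Finset.mul_sum]
    rw [Real.exp_sum]
    exact Finset.prod_congr rfl fun i _ => (Real.exp_sum _ _).symm
  have hkey : Real.exp (-(Ff γ p β)) * Real.exp (γ * S)
      = (∏ i, w i) * ∏ j, w' j := by
    have hadd : -(Ff γ p β) + γ * S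
        = (∑ i, Real.log (w i)) + ∑ j, Real.log (w' j) := by
      rw [hFf]; ring
    rw [← Real.exp_add, hadd, Real.exp_add, Real.exp_sum, Real.exp_sum]
    congr 1
    · exact Finset.prod_congr rfl fun i _ => Real.exp_log (hw i)
    · exact Finset.prod_congr rfl fun j _ => Real.exp_log (hw' j)
  rw [hperm, hprodpow, ← hkey]
  ring
end

section
/- Let p be an n×n real matrix with nonnegative entries. Suppose β lies in the interior of the β-polytope 𝓑_p of p and solves the BP equations for p. Then perm(p) ≤ Z_BP(β|p) · ( ∏_{(i,j): p_ij>0} (1−β_ij) )^{−1} · ∏_{j=1}^n ( 1 − Σ_{i=1}^n (β_ij)² ). -/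
open scoped BigOperators

theorem BP_upper_bound {n : ℕ} (p β : Matrix (Fin n) (Fin n) ℝ)
    (hp : ∀ i j, 0 ≤ p i j) (hβ : InInterior p β)
    (hBP : ∃ u v : Fin n → ℝ, (∀ i, 0 < u i) ∧ (∀ j, 0 < v j) ∧
      ∀ i j, β i j * (1 - β i j) = p i j / (u i * v j)) :
    permanent p ≤ Real.exp (-(FBP p β)) *
      (∏ i, ∏ j, if 0 < p i j then 1 - β i j else 1)⁻¹ *
      ∏ j, (1 - ∑ i, (β i j) ^ 2) := by
  obtain ⟨u, v, hu, hv, hbp⟩ := hBP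
  obtain ⟨⟨⟨hβ0, hrow, hcol⟩, hzero⟩, hint⟩ := hβ
  set M : Matrix (Fin n) (Fin n) ℝ := fun i j => β i j * (1 - β i j) with hMdef
  have huv : ∀ i j, (0:ℝ) < u i * v j := fun i j => mul_pos (hu i) (hv j)
  have hpM : ∀ i j, p i j = u i * v j * M i j := by
    intro i j
    have h := hbp i j
    rw [eq_div_iff (huv i j).ne'] at h
    rw [← h]; ring
  have hMnn : ∀ i j, 0 ≤ M i j := by
    intro i j
    rcases (hp i j).lt_or_eq with h | h
    · have h1 := hint i j h
      have : (0:ℝ) ≤ β i j * (1 - β i j) := mul_nonneg h1.1.le (by linarith [h1.2])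
      simpa [hMdef] using this
    · have hb := hzero i j h.symm
      simp [hMdef, hb]
  -- Step A
  have stepA : permanent p = (∏ i, u i) * (∏ j, v j) * permanent M := by
    unfold permanent
    rw [Finset.mul_sum]
    apply Finset.sum_congr rfl
    intro σ _
    have h1 : ∏ i, p i (σ i) = ∏ i, (u i * v (σ i) * M i (σ i)) :=
      Finset.prod_congr rfl fun i _ => hpM i (σ i)
    rw [h1, Finset.prod_mul_distrib, Finset.prod_mul_distrib, Equiv.prod_comp σ v]
  -- Step B
  have stepB : permanent M ≤ ∏ j, ∑ i, M i j := by
    have hre : ∀ σ : Equiv.Perm (Fin n), ∏ i, M i (σ i) = ∏ j, M (σ.symm j) j := by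
      intro σ
      rw [← Equiv.prod_comp σ.symm (fun i => M i (σ i))]
      simp
    unfold permanent
    simp_rw [hre]
    rw [Finset.prod_univ_sum]
    have hinj : Function.Injective (fun σ : Equiv.Perm (Fin n) => (σ.symm : Fin n → Fin n)) := by
      intro a b h
      simpa using congrArg Equiv.symm (Equiv.coe_fn_injective h)
    calc ∑ σ : Equiv.Perm (Fin n), ∏ j, M (σ.symm j) j
        = ∑ f ∈ Finset.univ.image (fun σ : Equiv.Perm (Fin n) => (σ.symm : Fin n → Fin n)),
            ∏ j, M (f j) j := by
          rw [Finset.sum_image (fun a _ b _ h => hinj h)]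
      _ ≤ ∑ f ∈ Fintype.piFinset (fun _ : Fin n => (Finset.univ : Finset (Fin n))),
            ∏ j, M (f j) j := by
          apply Finset.sum_le_sum_of_subset_of_nonneg
          · intro f _
            simp [Fintype.mem_piFinset]
          · intro f _ _
            exact Finset.prod_nonneg fun j _ => hMnn (f j) j
  -- Step C
  have stepC : ∀ j, ∑ i, M i j = 1 - ∑ i, (β i j) ^ 2 := by
    intro j
    have h1 : ∑ i, M i j = ∑ i, (β i j - β i j ^ 2) :=
      Finset.sum_congr rfl fun i _ => by simp [hMdef]; ring
    rw [h1, Finset.sum_sub_distrib, hcol j]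
  -- Step D
  have key : ∀ i j, Real.exp (-(if 0 < p i j then
        β i j * Real.log (β i j / p i j) - (1 - β i j) * Real.log (1 - β i j) else 0)) *
      (if 0 < p i j then 1 - β i j else 1)⁻¹
      = Real.exp (β i j * (Real.log (u i) + Real.log (v j))) := by
    intro i j
    by_cases h : 0 < p i j
    · have hb := hint i j h
      have hb1 : (0:ℝ) < 1 - β i j := by linarith [hb.2]
      have hlogp : Real.log (p i j) = Real.log (u i) + Real.log (v j)
          + (Real.log (β i j) + Real.log (1 - β i j)) := by
        rw [hpM i j, hMdef]
        rw [Real.log_mul (huv i j).ne' (mul_pos hb.1 hb1).ne',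
          Real.log_mul (hu i).ne' (hv j).ne',
          Real.log_mul hb.1.ne' hb1.ne']
      have hlogdiv : Real.log (β i j / p i j) = Real.log (β i j) - Real.log (p i j) :=
        Real.log_div hb.1.ne' h.ne'
      rw [if_pos h, if_pos h]
      have hinv : (1 - β i j)⁻¹ = Real.exp (-(Real.log (1 - β i j))) := by
        rw [Real.exp_neg, Real.exp_log hb1]
      rw [hinv, ← Real.exp_add, hlogdiv, hlogp]
      congr 1
      ring
    · rw [if_neg h, if_neg h]
      have hb : β i j = 0 := hzero i j (le_antisymm (not_lt.mp h) (hp i j))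
      simp [hb]
  have stepD : Real.exp (-(FBP p β)) *
      (∏ i, ∏ j, if 0 < p i j then 1 - β i j else 1)⁻¹ = (∏ i, u i) * (∏ j, v j) := by
    have e1 : Real.exp (-(FBP p β)) = ∏ i, ∏ j, Real.exp (-(if 0 < p i j then
        β i j * Real.log (β i j / p i j) - (1 - β i j) * Real.log (1 - β i j) else 0)) := by
      unfold FBP
      rw [← Finset.sum_neg_distrib, Real.exp_sum]
      exact Finset.prod_congr rfl fun i _ => by
        rw [← Finset.sum_neg_distrib, Real.exp_sum]
    have e2 : (∏ i, ∏ j, if 0 < p i j then 1 - β i j else 1)⁻¹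
        = ∏ i, ∏ j, (if 0 < p i j then 1 - β i j else 1)⁻¹ := by
      rw [← Finset.prod_inv_distrib]
      exact Finset.prod_congr rfl fun i _ => by rw [← Finset.prod_inv_distrib]
    rw [e1, e2, ← Finset.prod_mul_distrib]
    have e3 : ∀ i, (∏ j, Real.exp (-(if 0 < p i j then
        β i j * Real.log (β i j / p i j) - (1 - β i j) * Real.log (1 - β i j) else 0))) *
        (∏ j, (if 0 < p i j then 1 - β i j else 1)⁻¹)
        = ∏ j, Real.exp (β i j * (Real.log (u i) + Real.log (v j))) := by
      intro i
      rw [← Finset.prod_mul_distrib]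
      exact Finset.prod_congr rfl fun j _ => key i j
    calc (∏ i, (∏ j, Real.exp (-(if 0 < p i j then
            β i j * Real.log (β i j / p i j) - (1 - β i j) * Real.log (1 - β i j) else 0))) *
          (∏ j, (if 0 < p i j then 1 - β i j else 1)⁻¹))
        = ∏ i, ∏ j, Real.exp (β i j * (Real.log (u i) + Real.log (v j))) :=
          Finset.prod_congr rfl fun i _ => e3 i
      _ = Real.exp (∑ i, ∑ j, β i j * (Real.log (u i) + Real.log (v j))) := by
          rw [Real.exp_sum]
          exact Finset.prod_congr rfl fun i _ => (Real.exp_sum _ _).symm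
      _ = (∏ i, u i) * (∏ j, v j) := by
          have h1 : ∑ i, ∑ j, β i j * (Real.log (u i) + Real.log (v j))
              = (∑ i, Real.log (u i)) + ∑ j, Real.log (v j) := by
            have hsplit : ∀ i, ∑ j, β i j * (Real.log (u i) + Real.log (v j))
                = Real.log (u i) + ∑ j, β i j * Real.log (v j) := by
              intro i
              have : ∑ j, β i j * (Real.log (u i) + Real.log (v j))
                  = (∑ j, β i j) * Real.log (u i) + ∑ j, β i j * Real.log (v j) := by
                rw [Finset.sum_mul, ← Finset.sum_add_distrib]
                exact Finset.sum_congr rfl fun j _ => by ring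
              rw [this, hrow i, one_mul]
            simp_rw [hsplit]
            rw [Finset.sum_add_distrib]
            congr 1
            rw [Finset.sum_comm]
            apply Finset.sum_congr rfl
            intro j _
            rw [← Finset.sum_mul, hcol j, one_mul]
          rw [h1, Real.exp_add, Real.exp_sum, Real.exp_sum]
          congr 1
          · exact Finset.prod_congr rfl fun i _ => Real.exp_log (hu i)
          · exact Finset.prod_congr rfl fun j _ => Real.exp_log (hv j)
  -- combine
  rw [stepA, stepD]
  have hprodC : ∏ j, (1 - ∑ i, (β i j) ^ 2) = ∏ j, ∑ i, M i j :=
    Finset.prod_congr rfl fun j _ => (stepC j).symm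
  rw [hprodC]
  have huvnn : (0:ℝ) ≤ (∏ i, u i) * (∏ j, v j) :=
    mul_nonneg (Finset.prod_nonneg fun i _ => (hu i).le)
      (Finset.prod_nonneg fun j _ => (hv j).le)
  exact mul_le_mul_of_nonneg_left stepB huvnn
end

section
/- Let p be an n×n real matrix with nonnegative entries and let γ ∈ [−1,1]. Suppose β lies in the interior of the β-polytope 𝓑_p of p and solves the γ-fractional equations for p. Then perm(p) ≤ Z_f^γ(β|p) · ( ∏_{(i,j): p_ij>0} (1−β_ij)^γ ) · ∏_{j=1}^n ( Σ_{i: p_ij>0} β_ij·(1−β_ij)^{−γ} ). -/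
open scoped BigOperators

set_option maxHeartbeats 1000000 in
theorem fractional_upper_bound {n : ℕ} (γ : ℝ)
    (hγ : γ ∈ Set.Icc (-1 : ℝ) 1)
    (p β : Matrix (Fin n) (Fin n) ℝ)
    (hp : ∀ i j, 0 ≤ p i j) (hβ : InInterior p β)
    (hFrac : ∃ w w' : Fin n → ℝ, (∀ i, 0 < w i) ∧ (∀ j, 0 < w' j) ∧
      ∀ i j, β i j / (1 - β i j) ^ γ = p i j / (w i * w' j)) :
    permanent p ≤ Real.exp (-(Ff γ p β)) *
      (∏ i, ∏ j, if 0 < p i j then (1 - β i j) ^ γ else 1) *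
      ∏ j, (∑ i, if 0 < p i j then β i j * (1 - β i j) ^ (-γ) else 0) := by
  obtain ⟨⟨⟨hβnn, hrow, hcol⟩, hzero⟩, hint⟩ := hβ
  obtain ⟨w, w', hw, hw', heq⟩ := hFrac
  set x : Matrix (Fin n) (Fin n) ℝ :=
    fun i j => if 0 < p i j then β i j * (1 - β i j) ^ (-γ) else 0 with hxdef
  have hxnn : ∀ i j, 0 ≤ x i j := by
    intro i j
    by_cases h : 0 < p i j
    · simp only [hxdef, if_pos h]
      exact mul_nonneg (hβnn i j) (Real.rpow_nonneg (by linarith [(hint i j h).2]) _)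
    · simp [hxdef, h]
  -- p i j = w i * w' j * x i j
  have hpx : ∀ i j, p i j = w i * w' j * x i j := by
    intro i j
    by_cases h : 0 < p i j
    · obtain ⟨hb0, hb1⟩ := hint i j h
      have h1b : 0 < 1 - β i j := by linarith
      have hg : (0:ℝ) < (1 - β i j) ^ γ := Real.rpow_pos_of_pos h1b γ
      have hx' : x i j = β i j / (1 - β i j) ^ γ := by
        simp only [hxdef, if_pos h]
        rw [Real.rpow_neg (le_of_lt h1b), div_eq_mul_inv]
      rw [hx', heq i j, mul_comm (w i * w' j) _,
        div_mul_cancel₀ _ (ne_of_gt (mul_pos (hw i) (hw' j)))]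
    · have hp0 : p i j = 0 := le_antisymm (not_lt.mp h) (hp i j)
      simp [hxdef, h, hp0]
  have hww : (0:ℝ) < (∏ i, w i) * ∏ j, w' j :=
    mul_pos (Finset.prod_pos fun i _ => hw i) (Finset.prod_pos fun j _ => hw' j)
  -- Step 1 : permanent
  have hperm : permanent p = ((∏ i, w i) * ∏ j, w' j) * ∑ σ : Equiv.Perm (Fin n), ∏ i, x i (σ i) := by
    rw [permanent, Finset.mul_sum]
    refine Finset.sum_congr rfl fun σ _ => ?_
    calc ∏ i, p i (σ i) = ∏ i, (w i * w' (σ i) * x i (σ i)) := by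
            exact Finset.prod_congr rfl fun i _ => hpx i (σ i)
      _ = (∏ i, w i * w' (σ i)) * ∏ i, x i (σ i) := by rw [Finset.prod_mul_distrib]
      _ = ((∏ i, w i) * ∏ i, w' (σ i)) * ∏ i, x i (σ i) := by rw [Finset.prod_mul_distrib]
      _ = ((∏ i, w i) * ∏ j, w' j) * ∏ i, x i (σ i) := by rw [Equiv.prod_comp σ w']
  -- Step 2 : permanent of x ≤ product of column sums
  have hkey : (∑ σ : Equiv.Perm (Fin n), ∏ i, x i (σ i)) ≤ ∏ j, ∑ i, x i j := by
    have h1 : ∀ σ : Equiv.Perm (Fin n), ∏ i, x i (σ i) = ∏ j, x (σ.symm j) j := by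
      intro σ
      rw [← Equiv.prod_comp σ (fun j => x (σ.symm j) j)]
      simp
    calc (∑ σ : Equiv.Perm (Fin n), ∏ i, x i (σ i))
        = ∑ σ : Equiv.Perm (Fin n), ∏ j, x (σ.symm j) j := Finset.sum_congr rfl fun σ _ => h1 σ
      _ = ∑ f ∈ Finset.univ.image (fun σ : Equiv.Perm (Fin n) => ⇑σ.symm), ∏ j, x (f j) j := by
            rw [Finset.sum_image]
            intro a _ b _ hab
            have : a.symm = b.symm := Equiv.coe_fn_injective hab
            simpa using congrArg Equiv.symm this
      _ ≤ ∑ f : Fin n → Fin n, ∏ j, x (f j) j := by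
            apply Finset.sum_le_sum_of_subset_of_nonneg (Finset.subset_univ _)
            intro f _ _
            exact Finset.prod_nonneg fun j _ => hxnn _ j
      _ = ∏ j, ∑ i, x i j := (Fintype.prod_sum (κ := fun _ : Fin n => Fin n) (fun j i => x i j)).symm
  -- Step 3 : the constant
  have hfac : ∀ i j,
      Real.exp (-(if 0 < p i j then
          β i j * Real.log (β i j / p i j) + γ * ((1 - β i j) * Real.log (1 - β i j)) else 0))
        * (if 0 < p i j then (1 - β i j) ^ γ else 1)
      = (w i * w' j) ^ (β i j) := by
    intro i j
    by_cases h : 0 < p i j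
    · simp only [if_pos h]
      obtain ⟨hb0, hb1⟩ := hint i j h
      have h1b : 0 < 1 - β i j := by linarith
      have hwwij : (0:ℝ) < w i * w' j := mul_pos (hw i) (hw' j)
      have hg : (0:ℝ) < (1 - β i j) ^ γ := Real.rpow_pos_of_pos h1b γ
      have hcross : β i j * (w i * w' j) = p i j * (1 - β i j) ^ γ := by
        have h2 := heq i j
        field_simp at h2
        rw [eq_div_iff (ne_of_gt hwwij)] at h2
        linarith [h2]
      have hlog : Real.log (w i * w' j)
          = Real.log (p i j) - Real.log (β i j) + γ * Real.log (1 - β i j) := by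
        have hval : w i * w' j = p i j / β i j * (1 - β i j) ^ γ := by
          field_simp
          linarith [hcross]
        rw [hval, Real.log_mul (by positivity) (ne_of_gt hg),
          Real.log_div (ne_of_gt h) (ne_of_gt hb0), Real.log_rpow h1b]
      rw [Real.rpow_def_of_pos h1b, Real.rpow_def_of_pos hwwij, ← Real.exp_add]
      congr 1
      rw [Real.log_div (ne_of_gt hb0) (ne_of_gt h), hlog]
      ring
    · simp only [if_neg h]
      have hp0 : p i j = 0 := le_antisymm (not_lt.mp h) (hp i j)
      rw [hzero i j hp0]
      simp
  have hC : Real.exp (-(Ff γ p β)) * (∏ i, ∏ j, if 0 < p i j then (1 - β i j) ^ γ else 1)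
      = (∏ i, w i) * ∏ j, w' j := by
    have hneg : -(Ff γ p β) = ∑ i, ∑ j, -(if 0 < p i j then
        β i j * Real.log (β i j / p i j) + γ * ((1 - β i j) * Real.log (1 - β i j)) else 0) := by
      rw [Ff]; simp [Finset.sum_neg_distrib]
    rw [hneg, Real.exp_sum]
    calc (∏ i, Real.exp (∑ j, -(if 0 < p i j then
            β i j * Real.log (β i j / p i j) + γ * ((1 - β i j) * Real.log (1 - β i j)) else 0)))
          * (∏ i, ∏ j, if 0 < p i j then (1 - β i j) ^ γ else 1)
        = ∏ i, ∏ j, (w i * w' j) ^ (β i j) := by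
          rw [← Finset.prod_mul_distrib]
          refine Finset.prod_congr rfl fun i _ => ?_
          rw [Real.exp_sum, ← Finset.prod_mul_distrib]
          exact Finset.prod_congr rfl fun j _ => hfac i j
      _ = (∏ i, ∏ j, (w i) ^ (β i j)) * ∏ i, ∏ j, (w' j) ^ (β i j) := by
          rw [← Finset.prod_mul_distrib]
          refine Finset.prod_congr rfl fun i _ => ?_
          rw [← Finset.prod_mul_distrib]
          exact Finset.prod_congr rfl fun j _ =>
            Real.mul_rpow (le_of_lt (hw i)) (le_of_lt (hw' j))
      _ = (∏ i, w i) * ∏ j, w' j := by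
          congr 1
          · refine Finset.prod_congr rfl fun i _ => ?_
            rw [← Real.rpow_sum_of_pos (hw i), hrow i, Real.rpow_one]
          · rw [Finset.prod_comm]
            refine Finset.prod_congr rfl fun j _ => ?_
            rw [← Real.rpow_sum_of_pos (hw' j), hcol j, Real.rpow_one]
  rw [hC, hperm]
  exact mul_le_mul_of_nonneg_left hkey (le_of_lt hww)
end

section
/- Let p be an n×n real matrix with nonnegative entries and perm(p) > 0. Then for every γ ∈ [0,1], perm(p) ≤ Z_of^γ(p). -/
open scoped BigOperators

private lemma aux_mul_log_ge (x : ℝ) (h0 : 0 ≤ x) : -1 ≤ x * Real.log x := by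
  rcases eq_or_lt_of_le h0 with h | h
  · simp [← h]
  · have h1 : Real.log x⁻¹ ≤ x⁻¹ - 1 := Real.log_le_sub_one_of_pos (by positivity)
    rw [Real.log_inv] at h1
    have h2 := mul_le_mul_of_nonneg_left h1 h0
    have h3 : x * x⁻¹ = 1 := mul_inv_cancel₀ h.ne'
    nlinarith

private lemma aux_mul_log_nonpos (x : ℝ) (h0 : 0 ≤ x) (h1 : x ≤ 1) : x * Real.log x ≤ 0 :=
  mul_nonpos_of_nonneg_of_nonpos h0 (Real.log_nonpos h0 h1)

set_option maxHeartbeats 2000000 in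
theorem Zof_upper_bound_nonneg_gamma {n : ℕ}
    (p : Matrix (Fin n) (Fin n) ℝ)
    (hp : ∀ i j, 0 ≤ p i j) (hperm : 0 < permanent p) :
    ∀ γ : ℝ, γ ∈ Set.Icc (0 : ℝ) 1 → permanent p ≤ Zof γ p := by
  intro γ hγ
  obtain ⟨hγ0, hγ1⟩ := hγ
  classical
  classical
  set P := permanent p with hPdef
  set w : Equiv.Perm (Fin n) → ℝ := fun σ => ∏ i, p i (σ i) with hwdef
  have hw0 : ∀ σ, 0 ≤ w σ := fun σ => Finset.prod_nonneg fun i _ => hp i (σ i)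
  have hPsum : P = ∑ σ : Equiv.Perm (Fin n), w σ := rfl
  set β : Matrix (Fin n) (Fin n) ℝ :=
    Matrix.of (fun i j => (∑ σ : Equiv.Perm (Fin n), if σ i = j then w σ else 0) / P) with hβdef
  have hβapp : ∀ i j, β i j =
      (∑ σ : Equiv.Perm (Fin n), if σ i = j then w σ else 0) / P := fun i j => rfl
  have hβ0 : ∀ i j, 0 ≤ β i j := by
    intro i j; rw [hβapp]
    apply div_nonneg _ hperm.le
    exact Finset.sum_nonneg fun σ _ => by split_ifs <;> simp [hw0]
  have hrow : ∀ i, ∑ j, β i j = 1 := by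
    intro i
    rw [show (∑ j, β i j) = (∑ j, ∑ σ : Equiv.Perm (Fin n), if σ i = j then w σ else 0) / P by
      simp only [hβapp, ← Finset.sum_div]]
    rw [Finset.sum_comm]
    simp only [Finset.sum_ite_eq, Finset.mem_univ, if_true]
    rw [← hPsum]; exact div_self hperm.ne'
  have hcol : ∀ j, ∑ i, β i j = 1 := by
    intro j
    rw [show (∑ i, β i j) = (∑ i, ∑ σ : Equiv.Perm (Fin n), if σ i = j then w σ else 0) / P by
      simp only [hβapp, ← Finset.sum_div]]
    rw [Finset.sum_comm]
    have : ∀ σ : Equiv.Perm (Fin n), (∑ i, if σ i = j then w σ else 0) = w σ := by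
      intro σ
      have : ∀ i : Fin n, (σ i = j) = (i = σ.symm j) := by
        intro i; simp [Equiv.apply_eq_iff_eq_symm_apply]
      simp only [this, Finset.sum_ite_eq', Finset.mem_univ, if_true]
    simp only [this]
    rw [← hPsum]; exact div_self hperm.ne'
  have hsupp : ∀ i j, p i j = 0 → β i j = 0 := by
    intro i j hpij
    rw [hβapp]
    have : ∀ σ : Equiv.Perm (Fin n), (if σ i = j then w σ else 0) = 0 := by
      intro σ
      split_ifs with h
      · exact Finset.prod_eq_zero (Finset.mem_univ i) (by rw [h]; exact hpij)
      · rfl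
    simp [this]
  have hβle1 : ∀ i j, β i j ≤ 1 := by
    intro i j
    calc β i j ≤ ∑ j', β i j' :=
          Finset.single_le_sum (fun j' _ => hβ0 i j') (Finset.mem_univ j)
      _ = 1 := hrow i
  have hβge : ∀ (σ : Equiv.Perm (Fin n)) (i : Fin n), w σ / P ≤ β i (σ i) := by
    intro σ i
    rw [hβapp]
    gcongr
    have := Finset.single_le_sum (f := fun σ' : Equiv.Perm (Fin n) =>
        if σ' i = σ i then w σ' else 0)
        (fun σ' _ => by split_ifs <;> simp [hw0]) (Finset.mem_univ σ)
    simpa using this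
  set ν : Equiv.Perm (Fin n) → ℝ := fun σ => ∏ i, β i (σ i) with hνdef
  have hν0 : ∀ σ, 0 ≤ ν σ := fun σ => Finset.prod_nonneg fun i _ => hβ0 i (σ i)
  have hlogsum : ∀ σ : Equiv.Perm (Fin n),
      w σ * ∑ i, Real.log (β i (σ i) / p i (σ i)) = w σ * Real.log (ν σ / w σ) := by
    intro σ
    rcases eq_or_lt_of_le (hw0 σ) with h | h
    · rw [← h]; ring
    · have hppos : ∀ i : Fin n, 0 < p i (σ i) := by
        intro i
        rcases eq_or_lt_of_le (hp i (σ i)) with h' | h'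
        · exfalso
          have : w σ = 0 := Finset.prod_eq_zero (Finset.mem_univ i) h'.symm
          linarith
        · exact h'
      have hβpos : ∀ i : Fin n, 0 < β i (σ i) := fun i =>
        lt_of_lt_of_le (div_pos h hperm) (hβge σ i)
      congr 1
      rw [← Real.log_prod (fun i _ => (div_pos (hβpos i) (hppos i)).ne')]
      rw [Finset.prod_div_distrib]
  have hswap : (∑ i, ∑ j, β i j * Real.log (β i j / p i j))
      = (∑ σ : Equiv.Perm (Fin n), w σ * Real.log (ν σ / w σ)) / P := by
    have e1 : ∀ i j, β i j * Real.log (β i j / p i j)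
        = (∑ σ : Equiv.Perm (Fin n),
            if σ i = j then w σ * Real.log (β i j / p i j) else 0) / P := by
      intro i j
      rw [hβapp, div_mul_eq_mul_div, Finset.sum_mul]
      congr 1
      exact Finset.sum_congr rfl fun σ _ => by split_ifs <;> simp
    simp only [e1, ← Finset.sum_div]
    congr 1
    have h1 : ∀ i : Fin n, (∑ j, ∑ σ : Equiv.Perm (Fin n),
          if σ i = j then w σ * Real.log (β i j / p i j) else 0)
        = ∑ σ : Equiv.Perm (Fin n), w σ * Real.log (β i (σ i) / p i (σ i)) := by
      intro i
      rw [Finset.sum_comm]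
      exact Finset.sum_congr rfl fun σ _ => by
        simp only [Finset.sum_ite_eq, Finset.mem_univ, if_true]
    simp only [h1]
    rw [Finset.sum_comm]
    exact Finset.sum_congr rfl fun σ _ => by rw [← Finset.mul_sum, hlogsum]
  have hbound : ∀ σ : Equiv.Perm (Fin n),
      w σ * Real.log (ν σ / w σ) ≤ P * ν σ - w σ - w σ * Real.log P := by
    intro σ
    rcases eq_or_lt_of_le (hw0 σ) with h | h
    · rw [← h]
      have := hν0 σ
      nlinarith
    · have hνpos : 0 < ν σ := Finset.prod_pos fun i _ =>
        lt_of_lt_of_le (div_pos h hperm) (hβge σ i)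
      have h1 : Real.log (P * ν σ / w σ) ≤ P * ν σ / w σ - 1 :=
        Real.log_le_sub_one_of_pos (by positivity)
      have h2 : Real.log (P * ν σ / w σ) = Real.log P + Real.log (ν σ / w σ) := by
        rw [mul_div_assoc, Real.log_mul hperm.ne' (by positivity)]
      have h3 : w σ * (P * ν σ / w σ) = P * ν σ := by field_simp
      nlinarith [mul_le_mul_of_nonneg_left h1 (hw0 σ)]
  have hperm_β : (∑ σ : Equiv.Perm (Fin n), ν σ) ≤ 1 := by
    have hinj : Function.Injective
        (fun σ : Equiv.Perm (Fin n) => (σ : Fin n → Fin n)) := by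
      intro a b h
      exact Equiv.coe_fn_injective h
    have h1 : (∑ σ : Equiv.Perm (Fin n), ν σ)
        = ∑ f ∈ Finset.univ.image (fun σ : Equiv.Perm (Fin n) => (σ : Fin n → Fin n)),
            ∏ i, β i (f i) := by
      rw [Finset.sum_image (fun a _ b _ h => hinj h)]
    rw [h1]
    have h2 : Finset.univ.image (fun σ : Equiv.Perm (Fin n) => (σ : Fin n → Fin n))
        ⊆ Fintype.piFinset (fun _ : Fin n => (Finset.univ : Finset (Fin n))) := by
      intro f _
      simp [Fintype.mem_piFinset]
    calc _ ≤ ∑ f ∈ Fintype.piFinset (fun _ : Fin n => (Finset.univ : Finset (Fin n))),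
          ∏ i, β i (f i) :=
        Finset.sum_le_sum_of_subset_of_nonneg h2
          (fun f _ _ => Finset.prod_nonneg fun i _ => hβ0 i (f i))
      _ = ∏ i, ∑ j, β i j := (Finset.prod_univ_sum _ _).symm
      _ = 1 := by simp [hrow]
  have hkey : (∑ i, ∑ j, β i j * Real.log (β i j / p i j)) ≤ -Real.log P := by
    rw [hswap, div_le_iff₀ hperm]
    calc (∑ σ : Equiv.Perm (Fin n), w σ * Real.log (ν σ / w σ))
        ≤ ∑ σ : Equiv.Perm (Fin n), (P * ν σ - w σ - w σ * Real.log P) :=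
          Finset.sum_le_sum fun σ _ => hbound σ
      _ = P * (∑ σ : Equiv.Perm (Fin n), ν σ) - P - P * Real.log P := by
          rw [Finset.sum_sub_distrib, Finset.sum_sub_distrib, ← Finset.mul_sum,
            ← Finset.sum_mul, ← hPsum]
      _ ≤ P * 1 - P - P * Real.log P := by nlinarith
      _ = -Real.log P * P := by ring
  -- membership of β in the polytope
  have hmem : InPolytope p β := ⟨⟨hβ0, hrow, hcol⟩, hsupp⟩
  -- Ff at β is at most -log P
  have hFfβ : Ff γ p β ≤ -Real.log P := by
    have hterm : ∀ i j, (if 0 < p i j then β i j * Real.log (β i j / p i j)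
        + γ * ((1 - β i j) * Real.log (1 - β i j)) else 0)
        ≤ β i j * Real.log (β i j / p i j) := by
      intro i j
      split_ifs with h
      · have t1 : (1 - β i j) * Real.log (1 - β i j) ≤ 0 :=
          aux_mul_log_nonpos _ (by linarith [hβle1 i j]) (by linarith [hβ0 i j])
        have := mul_nonpos_of_nonneg_of_nonpos hγ0 t1
        linarith
      · have hpij : p i j = 0 := le_antisymm (not_lt.mp h) (hp i j)
        rw [hsupp i j hpij]
        simp
    calc Ff γ p β ≤ ∑ i, ∑ j, β i j * Real.log (β i j / p i j) :=
          Finset.sum_le_sum fun i _ => Finset.sum_le_sum fun j _ => hterm i j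
      _ ≤ -Real.log P := hkey
  -- the image set is bounded below
  have hbdd : BddBelow ((fun β' => Ff γ p β') '' {β' | InPolytope p β'}) := by
    refine ⟨∑ i, ∑ j : Fin n, -(p i j + 2), ?_⟩
    rintro x ⟨β', hβ', rfl⟩
    obtain ⟨⟨hb0, hbrow, _⟩, _⟩ := hβ'
    have hble1 : ∀ i j, β' i j ≤ 1 := by
      intro i j
      calc β' i j ≤ ∑ j', β' i j' :=
            Finset.single_le_sum (fun j' _ => hb0 i j') (Finset.mem_univ j)
        _ = 1 := hbrow i
    refine Finset.sum_le_sum fun i _ => Finset.sum_le_sum fun j _ => ?_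
    split_ifs with h
    · have hx0 := hb0 i j
      have hx1 := hble1 i j
      have claimA : -(p i j + 1) ≤ β' i j * Real.log (β' i j / p i j) := by
        rcases eq_or_lt_of_le hx0 with hx | hx
        · rw [← hx]
          nlinarith
        · rw [Real.log_div hx.ne' h.ne']
          have a1 : -1 ≤ β' i j * Real.log (β' i j) := aux_mul_log_ge _ hx0
          have a2 : β' i j * Real.log (p i j) ≤ p i j := by
            rcases le_or_gt (Real.log (p i j)) 0 with hl | hl
            · nlinarith
            · have := Real.log_le_sub_one_of_pos h
              nlinarith
          nlinarith
      have claimB : -1 ≤ γ * ((1 - β' i j) * Real.log (1 - β' i j)) := by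
        have b1 : -1 ≤ (1 - β' i j) * Real.log (1 - β' i j) :=
          aux_mul_log_ge _ (by linarith)
        have b2 : (1 - β' i j) * Real.log (1 - β' i j) ≤ 0 :=
          aux_mul_log_nonpos _ (by linarith) (by linarith)
        nlinarith
      linarith
    · have := hp i j
      linarith
  -- conclude
  have hsinf : sInf ((fun β' => Ff γ p β') '' {β' | InPolytope p β'}) ≤ -Real.log P :=
    le_trans (csInf_le hbdd ⟨β, hmem, rfl⟩) hFfβ
  have : P ≤ Zof γ p := by
    calc P = Real.exp (Real.log P) := (Real.exp_log hperm).symm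
      _ ≤ Zof γ p := Real.exp_le_exp.mpr (by linarith)
  exact this
end
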